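/- arXiv:2102.05779 — 9 statements merged into one kernel-verified Lean document; each statement's English description precedes it below -/
import Mathlib

section
/- Fix an integer p ≥ 3 and set λ = 2cos(π/p). Let U = ((λ,-1),(1,0)) and S = ((1,λ),(0,1)) in SL(2,ℝ), and for 1 ≤ j ≤ p-1 define V_j = U^{j-1}·S. Then the conjugacy class generators satisfy V_jᵀ = V_{p-j} for every 1 ≤ j ≤ p-1, where ᵀ denotes the matrix transpose. -/
open Matrix

/-- Fix an integer `p ≥ 3` and set `λ = 2cos(π/p)`.  Let
`U = ((λ,-1),(1,0))` and `S = ((1,λ),(0,1))`, and for `1 ≤ j ≤ p-1` define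
`V_j = U^(j-1) * S`.  Then the conjugacy class generators satisfy
`V_jᵀ = V_(p-j)` for every `1 ≤ j ≤ p-1`. -/
theorem stmt1 (p : ℕ) (hp : 3 ≤ p)
    (lam : ℝ) (hlam : lam = 2 * Real.cos (Real.pi / p))
    (U S : Matrix (Fin 2) (Fin 2) ℝ)
    (hU : U = !![lam, -1; 1, 0]) (hS : S = !![1, lam; 0, 1])
    (V : ℕ → Matrix (Fin 2) (Fin 2) ℝ)
    (hV : ∀ j : ℕ, 1 ≤ j → j ≤ p - 1 → V j = U ^ (j - 1) * S) :
    ∀ j : ℕ, 1 ≤ j → j ≤ p - 1 → (V j)ᵀ = V (p - j) := by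
  have hUp : U ^ p = -1 := by
    set θ : ℝ := Real.pi / p with hθ
    have hppos : (0:ℝ) < p := by positivity
    have hθpos : 0 < θ := by positivity
    have hθlt : θ < Real.pi := by
      rw [hθ]
      calc Real.pi / p < Real.pi / 1 := by
            apply div_lt_div_of_pos_left Real.pi_pos one_pos
            exact_mod_cast by omega
        _ = Real.pi := by ring
    have hsin : Real.sin θ ≠ 0 := ne_of_gt (Real.sin_pos_of_pos_of_lt_pi hθpos hθlt)
    set s : ℕ → ℝ := fun k => Real.sin (k * θ) / Real.sin θ with hs
    have hrec : ∀ k : ℕ, s (k + 2) = s (k + 1) * lam - s k := by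
      intro k
      have hl : lam = 2 * Real.cos θ := hlam
      simp only [hs]
      push_cast
      rw [show ((k:ℝ) + 2) * θ = ((k:ℝ) + 1) * θ + θ by ring, Real.sin_add,
        show (k:ℝ) * θ = ((k:ℝ) + 1) * θ - θ by ring, Real.sin_sub, hl]
      field_simp
      ring
    have hs0 : s 0 = 0 := by simp [hs]
    have hs1 : s 1 = 1 := by simp [hs, div_self hsin]
    have hs2 : s 2 = lam := by
      simp only [hs]
      push_cast
      rw [show (2:ℝ) * θ = θ + θ by ring, Real.sin_add, hlam]
      field_simp [hθ]
      ring
    have hpow : ∀ n : ℕ, U ^ (n + 1) = !![s (n+2), -(s (n+1)); s (n+1), -(s n)] := by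
      intro n
      induction n with
      | zero =>
        rw [pow_one, hU]
        ext i j
        fin_cases i <;> fin_cases j <;> simp [hs0, hs1, hs2]
      | succ n ih =>
        rw [pow_succ, ih, hU]
        have h1 := hrec n
        have h2 := hrec (n + 1)
        ext i j
        fin_cases i <;> fin_cases j <;>
          simp [Matrix.mul_apply, Fin.sum_univ_succ] <;>
          linarith [h1, h2]
    have hpπ : (p:ℝ) * θ = Real.pi := by
      rw [hθ]; field_simp
    have hsp : s p = 0 := by simp [hs, hpπ]
    have hsp1 : s (p + 1) = -1 := by
      simp only [hs]
      push_cast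
      rw [show ((p:ℝ) + 1) * θ = (p:ℝ) * θ + θ by ring, hpπ, Real.sin_add]
      rw [Real.sin_pi, Real.cos_pi]
      field_simp
      ring
    have hspm1 : s (p - 1) = 1 := by
      simp only [hs]
      rw [Nat.cast_sub (by omega), Nat.cast_one]
      rw [show ((p:ℝ) - 1) * θ = Real.pi - θ by rw [← hpπ]; ring, Real.sin_pi_sub]
      exact div_self hsin
    have hp1 : p - 1 + 1 = p := by omega
    have := hpow (p - 1)
    rw [hp1] at this
    rw [show p - 1 + 2 = p + 1 by omega] at this
    rw [this, hsp1, hsp, hspm1]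
    ext i j
    fin_cases i <;> fin_cases j <;> simp [Matrix.one_apply]
  set T : Matrix (Fin 2) (Fin 2) ℝ := !![0, -1; 1, 0] with hT
  set X : Matrix (Fin 2) (Fin 2) ℝ := -(U ^ (p - 1)) with hX
  have hcomm : Commute X U := by
    rw [hX]; exact ((Commute.refl U).pow_left (p-1)).neg_left
  have hXU : X * U = 1 := by
    rw [hX, neg_mul, ← pow_succ, show p - 1 + 1 = p by omega, hUp, neg_neg]
  have hUTU : U * T * Uᵀ = T := by
    rw [hU, hT]
    ext i j
    fin_cases i <;> fin_cases j <;>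
      simp [Matrix.mul_apply, Fin.sum_univ_succ, Matrix.transpose_apply, Matrix.vecHead, Matrix.vecTail] <;> ring
  have hTU : T * Uᵀ = X * T := by
    calc T * Uᵀ = (X * U) * T * Uᵀ := by rw [hXU, one_mul]
    _ = X * (U * T * Uᵀ) := by noncomm_ring
    _ = X * T := by rw [hUTU]
  have hTpow : ∀ n : ℕ, T * (Uᵀ) ^ n = X ^ n * T := by
    intro n
    induction n with
    | zero => simp
    | succ n ih =>
      rw [pow_succ, ← mul_assoc, ih, mul_assoc, hTU, pow_succ]
      noncomm_ring
  have hXn : ∀ n : ℕ, n ≤ p → X ^ n = -(U ^ (p - n)) := by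
    intro n hn
    have h1 : X ^ n * U ^ n = 1 := by
      rw [← hcomm.mul_pow, hXU, one_pow]
    have h2 : U ^ n * -(U ^ (p - n)) = 1 := by
      rw [mul_neg, ← pow_add, show n + (p - n) = p by omega, hUp, neg_neg]
    calc X ^ n = X ^ n * (U ^ n * -(U ^ (p - n))) := by rw [h2, mul_one]
    _ = (X ^ n * U ^ n) * -(U ^ (p - n)) := by rw [mul_assoc]
    _ = -(U ^ (p - n)) := by rw [h1, one_mul]
  have hST : Sᵀ = T * Uᵀ := by
    rw [hS, hU, hT]
    ext i j
    fin_cases i <;> fin_cases j <;>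
      simp [Matrix.mul_apply, Fin.sum_univ_succ, Matrix.transpose_apply, Matrix.vecHead, Matrix.vecTail]
  have hSUT : S = -(U * T) := by
    rw [hS, hU, hT]
    ext i j
    fin_cases i <;> fin_cases j <;>
      simp [Matrix.mul_apply, Fin.sum_univ_succ, Matrix.transpose_apply, Matrix.vecHead, Matrix.vecTail]
  intro j hj1 hj2
  have hpj1 : 1 ≤ p - j := by omega
  have hpj2 : p - j ≤ p - 1 := by omega
  rw [hV j hj1 hj2, hV (p - j) hpj1 hpj2, transpose_mul, transpose_pow, hST]
  calc T * Uᵀ * (Uᵀ) ^ (j - 1) = T * (Uᵀ) ^ j := by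
        rw [mul_assoc, ← pow_succ', show j - 1 + 1 = j by omega]
  _ = X ^ j * T := hTpow j
  _ = -(U ^ (p - j)) * T := by rw [hXn j (by omega)]
  _ = -(U ^ (p - j - 1) * U) * T := by rw [← pow_succ, show p - j - 1 + 1 = p - j by omega]
  _ = U ^ (p - j - 1) * S := by rw [hSUT]; noncomm_ring
end

section
/- Let n and q be positive integers. Then the number of primitive words of length n on q letters is P_q(n) = Σ_{d | n} μ(d)·q^{n/d}, where the sum runs over the positive divisors d of n and μ is the Möbius function. -/
/-- A word of length `m` on `q` letters (a function `ZMod m → Fin q`) is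
`d`-periodic if `w (i + d) = w i` for all `i`. -/
def WordPeriodic (m q : ℕ) (w : ZMod m → Fin q) (d : ℕ) : Prop :=
  ∀ i : ZMod m, w (i + (d : ZMod m)) = w i

/-- A word of length `m` is primitive if the only positive divisor `d` of `m`
for which it is `d`-periodic is `d = m`. -/
def WordPrimitive (m q : ℕ) (w : ZMod m → Fin q) : Prop :=
  ∀ d : ℕ, 0 < d → d ∣ m → WordPeriodic m q w d → d = m

/-- The number of primitive words of length `m` on `q` letters. -/
noncomputable def numPrimitiveWords (m q : ℕ) : ℕ :=
  Nat.card {w : ZMod m → Fin q // WordPrimitive m q w}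

/-! ### Auxiliary material -/

/-- The set of shifts fixing `w`, as an additive subgroup of `ZMod m`. -/
def periodGroup (m q : ℕ) (w : ZMod m → Fin q) : AddSubgroup (ZMod m) where
  carrier := {x | ∀ i, w (i + x) = w i}
  zero_mem' := by intro i; simp
  add_mem' := by
    intro x y hx hy i
    rw [← add_assoc, hy, hx]
  neg_mem' := by
    intro x hx i
    have h := hx (i + -x)
    simpa using h.symm

lemma wordPeriodic_iff_mem {m q : ℕ} (w : ZMod m → Fin q) (d : ℕ) :
    WordPeriodic m q w d ↔ (d : ZMod m) ∈ periodGroup m q w := Iff.rfl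

lemma wordPeriodic_self {m q : ℕ} (w : ZMod m → Fin q) : WordPeriodic m q w m := by
  intro i; simp

lemma wordPeriodic_gcd {m q : ℕ} {w : ZMod m → Fin q} {a b : ℕ}
    (ha : WordPeriodic m q w a) (hb : WordPeriodic m q w b) :
    WordPeriodic m q w (Nat.gcd a b) := by
  rw [wordPeriodic_iff_mem] at ha hb ⊢
  have key : ((Nat.gcd a b : ℕ) : ZMod m)
      = Nat.gcdA a b • (a : ZMod m) + Nat.gcdB a b • (b : ZMod m) := by
    have h := Nat.gcd_eq_gcd_ab a b
    have h2 : ((Nat.gcd a b : ℤ) : ZMod m)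
        = (((a : ℤ) * Nat.gcdA a b + (b : ℤ) * Nat.gcdB a b : ℤ) : ZMod m) := by
      exact_mod_cast congrArg (fun z : ℤ => (z : ZMod m)) h
    push_cast at h2 ⊢
    rw [h2]
    simp only [zsmul_eq_mul]
    ring
  rw [key]
  exact AddSubgroup.add_mem _ (AddSubgroup.zsmul_mem _ ha _) (AddSubgroup.zsmul_mem _ hb _)

/-- Composition with the cast map preserves periodicity. -/
lemma wordPeriodic_comp {m q d e : ℕ} (hd : d ∣ m) (w' : ZMod d → Fin q)
    (hw' : WordPeriodic d q w' e) :
    WordPeriodic m q (w' ∘ ZMod.castHom hd (ZMod d)) e := by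
  intro i
  simp only [Function.comp_apply, map_add, map_natCast]
  exact hw' _

/-- `w' ∘ cast` is always `d`-periodic. -/
lemma wordPeriodic_comp_self {m q d : ℕ} (hd : d ∣ m) (w' : ZMod d → Fin q) :
    WordPeriodic m q (w' ∘ ZMod.castHom hd (ZMod d)) d :=
  wordPeriodic_comp hd w' (wordPeriodic_self w')

lemma castHom_surjective {m d : ℕ} [NeZero d] (hd : d ∣ m) :
    Function.Surjective (ZMod.castHom hd (ZMod d)) := by
  intro j
  refine ⟨((j.val : ℕ) : ZMod m), ?_⟩
  rw [map_natCast, ZMod.natCast_zmod_val]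

/-- Periodicity of composed word descends to the quotient. -/
lemma wordPeriodic_of_comp {m q d e : ℕ} [NeZero d] (hd : d ∣ m) (w' : ZMod d → Fin q)
    (h : WordPeriodic m q (w' ∘ ZMod.castHom hd (ZMod d)) e) :
    WordPeriodic d q w' e := by
  intro j
  obtain ⟨i, rfl⟩ := castHom_surjective hd j
  have := h i
  simpa [map_add, map_natCast] using this

/-- A `d`-periodic word factors through `ZMod d`. -/
lemma exists_factor {m q : ℕ} [NeZero m] {d : ℕ} (hd : d ∣ m) (hd0 : 0 < d)
    {w : ZMod m → Fin q} (hw : WordPeriodic m q w d) :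
    ∃ w' : ZMod d → Fin q, w = w' ∘ ZMod.castHom hd (ZMod d) := by
  haveI : NeZero d := ⟨hd0.ne'⟩
  refine ⟨fun j => w ((j.val : ℕ) : ZMod m), ?_⟩
  funext i
  simp only [Function.comp_apply]
  have h1 : (ZMod.castHom hd (ZMod d) i) = ((i.val : ℕ) : ZMod d) := by
    conv_lhs => rw [← ZMod.natCast_zmod_val i]
    rw [map_natCast]
  rw [h1, ZMod.val_natCast]
  obtain ⟨k, hk⟩ : ∃ k, i.val = i.val % d + d * k := ⟨i.val / d, (Nat.mod_add_div _ _).symm⟩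
  have hmem : ((d * k : ℕ) : ZMod m) ∈ periodGroup m q w := by
    have : ((d * k : ℕ) : ZMod m) = k • ((d : ℕ) : ZMod m) := by
      push_cast
      rw [nsmul_eq_mul]
      ring
    rw [this]
    exact AddSubgroup.nsmul_mem _ ((wordPeriodic_iff_mem w d).mp hw) _
  calc w i = w ((i.val : ℕ) : ZMod m) := by rw [ZMod.natCast_zmod_val]
    _ = w (((i.val % d : ℕ) : ZMod m) + ((d * k : ℕ) : ZMod m)) := by
        rw [← Nat.cast_add, ← hk]
    _ = w ((i.val % d : ℕ) : ZMod m) := hmem _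

/-- The minimal positive period (among divisors of `m`) of a word. -/
noncomputable def minPeriod (m q : ℕ) (w : ZMod m → Fin q) : ℕ :=
  sInf {d : ℕ | 0 < d ∧ d ∣ m ∧ WordPeriodic m q w d}

lemma minPeriod_mem {m q : ℕ} (hm : 0 < m) (w : ZMod m → Fin q) :
    0 < minPeriod m q w ∧ minPeriod m q w ∣ m ∧ WordPeriodic m q w (minPeriod m q w) := by
  have hne : {d : ℕ | 0 < d ∧ d ∣ m ∧ WordPeriodic m q w d}.Nonempty :=
    ⟨m, hm, dvd_refl m, wordPeriodic_self w⟩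
  exact Nat.sInf_mem hne

lemma minPeriod_le {m q : ℕ} {w : ZMod m → Fin q} {e : ℕ} (he : 0 < e) (hem : e ∣ m)
    (hp : WordPeriodic m q w e) : minPeriod m q w ≤ e :=
  Nat.sInf_le ⟨he, hem, hp⟩

lemma minPeriod_dvd {m q : ℕ} (hm : 0 < m) {w : ZMod m → Fin q} {e : ℕ} (he : 0 < e)
    (hem : e ∣ m) (hp : WordPeriodic m q w e) : minPeriod m q w ∣ e := by
  obtain ⟨hd0, hdm, hdp⟩ := minPeriod_mem hm w
  have hg : WordPeriodic m q w (Nat.gcd (minPeriod m q w) e) := wordPeriodic_gcd hdp hp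
  have hgpos : 0 < Nat.gcd (minPeriod m q w) e := Nat.gcd_pos_of_pos_left _ hd0
  have hgm : Nat.gcd (minPeriod m q w) e ∣ m := (Nat.gcd_dvd_right _ _).trans hem
  have h1 : minPeriod m q w ≤ Nat.gcd (minPeriod m q w) e := minPeriod_le hgpos hgm hg
  have h2 : Nat.gcd (minPeriod m q w) e ≤ minPeriod m q w :=
    Nat.le_of_dvd hd0 (Nat.gcd_dvd_left _ _)
  have : Nat.gcd (minPeriod m q w) e = minPeriod m q w := le_antisymm h2 h1
  rw [← this]
  exact Nat.gcd_dvd_right _ _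

/-- If `w'` is primitive of length `d ∣ m`, the minimal period of `w' ∘ cast` is `d`. -/
lemma minPeriod_comp {m q d : ℕ} (hm : 0 < m) (hd : d ∣ m) (hd0 : 0 < d)
    {w' : ZMod d → Fin q} (hw' : WordPrimitive d q w') :
    minPeriod m q (w' ∘ ZMod.castHom hd (ZMod d)) = d := by
  haveI : NeZero d := ⟨hd0.ne'⟩
  set w := w' ∘ ZMod.castHom hd (ZMod d) with hw
  have hdper : WordPeriodic m q w d := wordPeriodic_comp_self hd w'
  obtain ⟨he0, hem, hep⟩ := minPeriod_mem hm w
  set e := minPeriod m q w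
  have hle : e ≤ d := minPeriod_le hd0 hd hdper
  -- w' is e-periodic, hence gcd e d periodic; primitivity forces gcd = d, so d ∣ e
  have hw'e : WordPeriodic d q w' e := wordPeriodic_of_comp hd w' hep
  have hw'g : WordPeriodic d q w' (Nat.gcd e d) := wordPeriodic_gcd hw'e (wordPeriodic_self w')
  have hgd : Nat.gcd e d = d :=
    hw' _ (Nat.gcd_pos_of_pos_left _ he0) (Nat.gcd_dvd_right _ _) hw'g
  have hdle : d ≤ e := Nat.le_of_dvd he0 (hgd ▸ Nat.gcd_dvd_left e d)
  omega

/-- The map from pairs (divisor, primitive word) to words, by composition with cast. -/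
noncomputable def toWord (n q : ℕ)
    (x : Σ d : {d // d ∈ n.divisors}, {w : ZMod (d : ℕ) → Fin q // WordPrimitive (d : ℕ) q w}) :
    ZMod n → Fin q :=
  x.2.1 ∘ ZMod.castHom (Nat.mem_divisors.mp x.1.2).1 (ZMod (x.1 : ℕ))

lemma toWord_bijective (n q : ℕ) (hn : 0 < n) : Function.Bijective (toWord n q) := by
  haveI : NeZero n := ⟨hn.ne'⟩
  constructor
  · rintro ⟨⟨d, hd⟩, ⟨w', hw'⟩⟩ ⟨⟨e, he⟩, ⟨v', hv'⟩⟩ hEq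
    have hdn := (Nat.mem_divisors.mp hd).1
    have hen := (Nat.mem_divisors.mp he).1
    have hd0 : 0 < d := Nat.pos_of_dvd_of_pos hdn hn
    have he0 : 0 < e := Nat.pos_of_dvd_of_pos hen hn
    haveI : NeZero d := ⟨hd0.ne'⟩
    have hde : d = e := by
      have h1 := minPeriod_comp hn hdn hd0 hw'
      have h2 := minPeriod_comp hn hen he0 hv'
      rw [← h1, ← h2]
      exact congrArg (minPeriod n q) hEq
    subst hde
    have hweq : w' = v' := by
      funext j
      obtain ⟨i, rfl⟩ := castHom_surjective hdn j
      exact congrFun hEq i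
    subst hweq
    rfl
  · intro w
    set d := minPeriod n q w with hdd
    obtain ⟨hd0, hdn, hdp⟩ := minPeriod_mem hn w
    obtain ⟨w', hw'⟩ := exists_factor hdn hd0 hdp
    have hprim : WordPrimitive d q w' := by
      intro e he0 hed hpe
      haveI : NeZero d := ⟨hd0.ne'⟩
      have : WordPeriodic n q w e := by
        rw [hw']
        exact wordPeriodic_comp hdn w' hpe
      have h1 : d ≤ e := minPeriod_le he0 (hed.trans hdn) this
      have h2 : e ≤ d := Nat.le_of_dvd hd0 hed
      omega
    exact ⟨⟨⟨d, Nat.mem_divisors.mpr ⟨hdn, hn.ne'⟩⟩, ⟨w', hprim⟩⟩, hw'.symm⟩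

/-- Counting words by minimal period: `∑_{d ∣ n} P_q(d) = q^n`. -/
lemma sum_numPrimitiveWords (q : ℕ) : ∀ n : ℕ, 0 < n →
    ∑ d ∈ n.divisors, (numPrimitiveWords d q : ℤ) = (q : ℤ) ^ n := by
  intro n hn
  haveI : NeZero n := ⟨hn.ne'⟩
  have hcard : Nat.card (Σ d : {d // d ∈ n.divisors},
      {w : ZMod (d : ℕ) → Fin q // WordPrimitive (d : ℕ) q w}) = Nat.card (ZMod n → Fin q) :=
    Nat.card_eq_of_bijective _ (toWord_bijective n q hn)
  have hfun : Nat.card (ZMod n → Fin q) = q ^ n := by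
    rw [Nat.card_fun, Nat.card_eq_fintype_card, Nat.card_eq_fintype_card,
      Fintype.card_fin, ZMod.card]
  classical
  have hsig : Nat.card (Σ d : {d // d ∈ n.divisors},
      {w : ZMod (d : ℕ) → Fin q // WordPrimitive (d : ℕ) q w})
      = ∑ d ∈ n.divisors, numPrimitiveWords d q := by
    haveI : ∀ d : {d // d ∈ n.divisors},
        Fintype {w : ZMod (d : ℕ) → Fin q // WordPrimitive (d : ℕ) q w} := fun d => by
      haveI : NeZero (d : ℕ) :=
        ⟨(Nat.pos_of_dvd_of_pos (Nat.mem_divisors.mp d.2).1 hn).ne'⟩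
      exact Fintype.ofFinite _
    rw [Nat.card_eq_fintype_card, Fintype.card_sigma]
    rw [← Finset.sum_coe_sort n.divisors (fun d => numPrimitiveWords d q)]
    congr 1
    funext d
    rw [numPrimitiveWords, Nat.card_eq_fintype_card]
  have : (∑ d ∈ n.divisors, numPrimitiveWords d q) = q ^ n := by
    rw [← hsig, hcard, hfun]
  exact_mod_cast congrArg (fun k : ℕ => (k : ℤ)) this

/-- Let `n` and `q` be positive integers.  Then the number of
primitive words of length `n` on `q` letters is
`P_q(n) = Σ_{d | n} μ(d)·q^(n/d)`, where `μ` is the Möbius function. -/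
theorem stmt6 (n q : ℕ) (hn : 0 < n) (hq : 0 < q) :
    (numPrimitiveWords n q : ℤ) =
      ∑ d ∈ n.divisors, ArithmeticFunction.moebius d * (q : ℤ) ^ (n / d) := by
  have key := (ArithmeticFunction.sum_eq_iff_sum_smul_moebius_eq
    (f := fun d => (numPrimitiveWords d q : ℤ)) (g := fun n => (q : ℤ) ^ n)).mp
    (fun m hm => sum_numPrimitiveWords q m hm) n hn
  rw [← key]
  rw [← Nat.sum_divisorsAntidiagonal
    (fun a b => (ArithmeticFunction.moebius a : ℤ) * (q : ℤ) ^ b)]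
  apply Finset.sum_congr rfl
  intro x _
  rw [zsmul_eq_mul]
  push_cast
  ring
end

section
/- Let n and q be positive integers. The additive group ZMod n acts on words of length n on q letters by rotation: (r · w)(i) = w(i + r). Then the number C_q(n) of orbits of this rotation action on the set of primitive words of length n on q letters satisfies n·C_q(n) = Σ_{d | n} μ(d)·q^{n/d}; that is, C_q(n) = (1/n)·Σ_{d | n} μ(d)·q^{n/d}. (In particular, every rotation orbit of a primitive word has exactly n elements.) -/
/-- Two primitive words of length `n` are rotation-equivalent if one is
obtained from the other by the rotation action of `ZMod n`:
`(r · w)(i) = w (i + r)`. -/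
def rotSetoid (n q : ℕ) : Setoid {w : ZMod n → Fin q // WordPrimitive n q w} where
  r w₁ w₂ := ∃ r : ZMod n, ∀ i : ZMod n, w₂.1 i = w₁.1 (i + r)
  iseqv := by
    constructor
    · intro w
      exact ⟨0, fun i => by rw [add_zero]⟩
    · rintro w₁ w₂ ⟨r, hr⟩
      exact ⟨-r, fun i => by
        rw [hr (i + -r), add_assoc, neg_add_cancel, add_zero]⟩
    · rintro w₁ w₂ w₃ ⟨r, hr⟩ ⟨s, hs⟩
      exact ⟨s + r, fun i => by rw [hs i, hr (i + s), add_assoc]⟩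

/-- The number of rotation orbits of primitive words of length `n` on `q`
letters (the number of primitive necklaces). -/
noncomputable def numPrimitiveNecklaces (n q : ℕ) : ℕ :=
  Nat.card (Quotient (rotSetoid n q))


namespace Stmt7Aux


variable {n q d : ℕ}

lemma rot_nsmul [NeZero n] {w : ZMod n → Fin q} {r : ZMod n}
    (h : ∀ i, w (i + r) = w i) : ∀ (k : ℕ) (i), w (i + k • r) = w i := by
  intro k
  induction k with
  | zero => simp
  | succ k ih =>
    intro i
    rw [succ_nsmul, ← add_assoc, h, ih]

lemma rot_mul [NeZero n] {w : ZMod n → Fin q} {r : ZMod n}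
    (h : ∀ i, w (i + r) = w i) (c : ZMod n) (i : ZMod n) : w (i + r * c) = w i := by
  have hc : r * c = c.val • r := by
    rw [nsmul_eq_mul, mul_comm, ZMod.natCast_val, ZMod.cast_id]
  rw [hc, rot_nsmul h]

lemma periodic_gcd [NeZero n] {w : ZMod n → Fin q} {a b : ℕ}
    (ha : WordPeriodic n q w a) (hb : WordPeriodic n q w b) :
    WordPeriodic n q w (Nat.gcd a b) := by
  intro i
  have hx : ((Nat.gcd a b : ℕ) : ZMod n)
      = (a : ZMod n) * ((Nat.gcdA a b : ℤ) : ZMod n)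
        + (b : ZMod n) * ((Nat.gcdB a b : ℤ) : ZMod n) := by
    have h := congrArg (fun z : ℤ => (z : ZMod n)) (Nat.gcd_eq_gcd_ab a b)
    push_cast at h
    simpa using h
  rw [hx]
  have hre : i + ((a : ZMod n) * ((Nat.gcdA a b : ℤ) : ZMod n)
        + (b : ZMod n) * ((Nat.gcdB a b : ℤ) : ZMod n))
      = (i + (b : ZMod n) * ((Nat.gcdB a b : ℤ) : ZMod n))
        + (a : ZMod n) * ((Nat.gcdA a b : ℤ) : ZMod n) := by ring
  rw [hre, rot_mul ha, rot_mul hb]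

lemma periodic_of_dvd [NeZero n] {w : ZMod n → Fin q} {a b : ℕ}
    (ha : WordPeriodic n q w a) (hab : a ∣ b) : WordPeriodic n q w b := by
  obtain ⟨k, rfl⟩ := hab
  intro i
  have h : ((a * k : ℕ) : ZMod n) = (a : ZMod n) * (k : ZMod n) := by push_cast; ring
  rw [h]
  exact rot_mul ha _ i

lemma periodic_self (w : ZMod n → Fin q) : WordPeriodic n q w n := by
  intro i; simp

noncomputable def minPer (n q : ℕ) (w : ZMod n → Fin q) : ℕ :=
  if h : 0 < n then
    @Nat.find (fun e => 0 < e ∧ e ∣ n ∧ WordPeriodic n q w e) (Classical.decPred _)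
      ⟨n, h, dvd_rfl, periodic_self w⟩
  else 0

lemma minPer_spec (hn : 0 < n) (w : ZMod n → Fin q) :
    0 < minPer n q w ∧ minPer n q w ∣ n ∧ WordPeriodic n q w (minPer n q w) := by
  rw [minPer, dif_pos hn]
  exact @Nat.find_spec (fun e => 0 < e ∧ e ∣ n ∧ WordPeriodic n q w e) (Classical.decPred _) ⟨n, hn, dvd_rfl, periodic_self w⟩

lemma minPer_min (hn : 0 < n) {w : ZMod n → Fin q} {e : ℕ}
    (h0 : 0 < e) (h1 : e ∣ n) (h2 : WordPeriodic n q w e) : minPer n q w ≤ e := by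
  rw [minPer, dif_pos hn]
  exact @Nat.find_min' (fun e => 0 < e ∧ e ∣ n ∧ WordPeriodic n q w e) (Classical.decPred _) _ _ ⟨h0, h1, h2⟩

lemma minPer_dvd (hn : 0 < n) {w : ZMod n → Fin q} {e : ℕ}
    (h2 : WordPeriodic n q w e) : minPer n q w ∣ e := by
  haveI : NeZero n := ⟨hn.ne'⟩
  obtain ⟨hm0, hmn, hmp⟩ := minPer_spec hn w
  have hg : WordPeriodic n q w (Nat.gcd (minPer n q w) e) := periodic_gcd hmp h2
  have hg0 : 0 < Nat.gcd (minPer n q w) e := Nat.gcd_pos_of_pos_left _ hm0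
  have hgn : Nat.gcd (minPer n q w) e ∣ n := (Nat.gcd_dvd_left _ _).trans hmn
  have hle : minPer n q w ≤ Nat.gcd (minPer n q w) e := minPer_min hn hg0 hgn hg
  have hge : Nat.gcd (minPer n q w) e ≤ minPer n q w :=
    Nat.le_of_dvd hm0 (Nat.gcd_dvd_left _ _)
  have heq : Nat.gcd (minPer n q w) e = minPer n q w := le_antisymm hge hle
  rw [← heq]
  exact Nat.gcd_dvd_right _ _

lemma primitive_iff_minPer (hn : 0 < n) (w : ZMod n → Fin q) :
    WordPrimitive n q w ↔ minPer n q w = n := by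
  obtain ⟨hm0, hmn, hmp⟩ := minPer_spec hn w
  constructor
  · intro hp
    exact hp _ hm0 hmn hmp
  · intro hmin e he0 hen hpe
    have := minPer_dvd hn hpe
    rw [hmin] at this
    exact Nat.dvd_antisymm hen this

lemma free (hn : 0 < n) {w : ZMod n → Fin q} (hw : WordPrimitive n q w)
    {r : ZMod n} (h : ∀ i, w (i + r) = w i) : r = 0 := by
  haveI : NeZero n := ⟨hn.ne'⟩
  have hper : WordPeriodic n q w r.val := by
    intro i
    rw [ZMod.natCast_val, ZMod.cast_id]
    exact h i
  by_contra hr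
  have hv : 0 < r.val := Nat.pos_of_ne_zero fun h' =>
    hr (by rw [← ZMod.natCast_rightInverse r, h']; simp)
  have hg : WordPeriodic n q w (Nat.gcd r.val n) := periodic_gcd hper (periodic_self w)
  have heq := hw _ (Nat.gcd_pos_of_pos_left _ hv) (Nat.gcd_dvd_right _ _) hg
  have hdv := Nat.gcd_dvd_left r.val n
  rw [heq] at hdv
  have hle : n ≤ r.val := Nat.le_of_dvd hv hdv
  exact absurd (ZMod.val_lt r) (not_lt.2 hle)

/-- Extend a word of length `d` to a word of length `n` for `d ∣ n`. -/
def extword (hd : d ∣ n) (v : ZMod d → Fin q) : ZMod n → Fin q :=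
  fun i => v (ZMod.castHom hd (ZMod d) i)

/-- Restrict a word of length `n` to one of length `d`. -/
def resword (d : ℕ) (w : ZMod n → Fin q) : ZMod d → Fin q :=
  fun j => w ((j.val : ZMod n))

lemma ext_periodic_iff [NeZero n] [NeZero d] (hd : d ∣ n)
    (v : ZMod d → Fin q) (e : ℕ) :
    WordPeriodic n q (extword hd v) e ↔ WordPeriodic d q v e := by
  constructor
  · intro h j
    have hi := h ((j.val : ZMod n))
    simp only [extword, map_add, map_natCast] at hi
    rwa [ZMod.natCast_val, ZMod.cast_id] at hi
  · intro h i
    simp only [extword, map_add, map_natCast]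
    exact h _

lemma res_ext [NeZero n] [NeZero d] (hd : d ∣ n) (v : ZMod d → Fin q) :
    resword d (extword hd v) = v := by
  funext j
  simp only [resword, extword, map_natCast]
  rw [ZMod.natCast_val, ZMod.cast_id]

lemma ext_res [NeZero n] [NeZero d] (hd : d ∣ n) {w : ZMod n → Fin q}
    (hw : WordPeriodic n q w d) : extword hd (resword d w) = w := by
  funext i
  have key : ∀ x : ℕ, ((x % d : ℕ) : ZMod n) + (d : ZMod n) * ((x / d : ℕ) : ZMod n)
      = (x : ZMod n) := by
    intro x
    conv_rhs => rw [← Nat.mod_add_div x d]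
    push_cast
    ring
  have hch : (ZMod.castHom hd (ZMod d) i).val = i.val % d := by
    rw [ZMod.castHom_apply, ← ZMod.natCast_val, ZMod.val_natCast]
  simp only [extword, resword, hch]
  have h1 : w ((i.val % d : ℕ) : ZMod n) = w i := by
    conv_rhs => rw [← ZMod.natCast_rightInverse i, ← key i.val, rot_mul hw]
  exact h1

noncomputable def equivFiber (hn : 0 < n) (hd : d ∣ n) (hd0 : 0 < d) :
    {w : ZMod n → Fin q // minPer n q w = d} ≃ {v : ZMod d → Fin q // WordPrimitive d q v} :=
  haveI : NeZero n := ⟨hn.ne'⟩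
  haveI : NeZero d := ⟨hd0.ne'⟩
  { toFun := fun w => ⟨resword d w.1, by
      have hper : WordPeriodic n q w.1 d := by
        have h := (minPer_spec hn w.1).2.2
        rwa [w.2] at h
      have hext : extword hd (resword d w.1) = w.1 := ext_res hd hper
      intro e he0 hed hpe
      have hwe : WordPeriodic n q w.1 e := by
        rw [← hext]
        exact (ext_periodic_iff hd _ e).mpr hpe
      have hdvd := minPer_dvd hn hwe
      rw [w.2] at hdvd
      exact Nat.dvd_antisymm hed hdvd⟩
    invFun := fun v => ⟨extword hd v.1, by
      have hdper : WordPeriodic n q (extword hd v.1) d :=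
        (ext_periodic_iff hd v.1 d).mpr (periodic_self v.1)
      obtain ⟨hm0, hmn, hmp⟩ := minPer_spec hn (extword hd v.1)
      have h1 : minPer n q (extword hd v.1) ∣ d := minPer_dvd hn hdper
      have hvm : WordPeriodic d q v.1 (minPer n q (extword hd v.1)) :=
        (ext_periodic_iff hd v.1 _).mp hmp
      exact v.2 _ hm0 h1 hvm⟩
    left_inv := fun w => by
      apply Subtype.ext
      have hper : WordPeriodic n q w.1 d := by
        have h := (minPer_spec hn w.1).2.2
        rwa [w.2] at h
      exact ext_res hd hper
    right_inv := fun v => Subtype.ext (res_ext hd v.1) }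

lemma sum_card_nat (q n : ℕ) (hn : 0 < n) :
    ∑ d ∈ n.divisors, Nat.card {v : ZMod d → Fin q // WordPrimitive d q v} = q ^ n := by
  haveI : NeZero n := ⟨hn.ne'⟩
  classical
  have h1 : (Finset.univ : Finset (ZMod n → Fin q)).card
      = ∑ d ∈ n.divisors, (Finset.univ.filter fun w => minPer n q w = d).card := by
    apply Finset.card_eq_sum_card_fiberwise
    intro w _
    exact Nat.mem_divisors.mpr ⟨(minPer_spec hn w).2.1, hn.ne'⟩
  have h2 : ∀ d ∈ n.divisors,
      (Finset.univ.filter fun w : ZMod n → Fin q => minPer n q w = d).card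
        = Nat.card {v : ZMod d → Fin q // WordPrimitive d q v} := by
    intro d hd
    obtain ⟨hdn, -⟩ := Nat.mem_divisors.mp hd
    have hd0 : 0 < d := Nat.pos_of_dvd_of_pos hdn hn
    rw [← Fintype.card_subtype, ← Nat.card_eq_fintype_card]
    exact Nat.card_congr (equivFiber hn hdn hd0)
  have h3 : (Finset.univ : Finset (ZMod n → Fin q)).card = q ^ n := by
    rw [Finset.card_univ, Fintype.card_fun, Fintype.card_fin, ZMod.card]
  rw [← Finset.sum_congr rfl h2, ← h1, h3]

lemma prim_rot {w : ZMod n → Fin q} (hw : WordPrimitive n q w) (r : ZMod n) :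
    WordPrimitive n q (fun i => w (i + r)) := by
  intro e he0 hen hper
  apply hw e he0 hen
  intro i
  have h := hper (i - r)
  simp only at h
  have e1 : i - r + (e : ZMod n) + r = i + (e : ZMod n) := by ring
  have e2 : i - r + r = i := by ring
  rwa [e1, e2] at h

lemma card_prim (hn : 0 < n) :
    Nat.card {w : ZMod n → Fin q // WordPrimitive n q w}
      = numPrimitiveNecklaces n q * n := by
  haveI : NeZero n := ⟨hn.ne'⟩
  classical
  let F : Quotient (rotSetoid n q) × ZMod n → {w : ZMod n → Fin q // WordPrimitive n q w} :=
    fun p => ⟨fun i => (p.1.out).1 (i + p.2), prim_rot (p.1.out).2 p.2⟩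
  have hF : Function.Bijective F := by
    constructor
    · rintro ⟨c, r⟩ ⟨c', r'⟩ h
      have h' : ∀ i, (c.out).1 (i + r) = (c'.out).1 (i + r') := fun i =>
        congrFun (congrArg Subtype.val h) i
      have hrel : (rotSetoid n q).r c.out c'.out := by
        refine ⟨r - r', fun i => ?_⟩
        have h2 := (h' (i - r')).symm
        have e1 : i - r' + r' = i := by ring
        have e2 : i - r' + r = i + (r - r') := by ring
        rwa [e1, e2] at h2
      have hc : c = c' := by
        rw [← c.out_eq, ← c'.out_eq]
        exact Quotient.sound hrel
      subst hc
      have hfree : ∀ j, (c.out).1 (j + (r - r')) = (c.out).1 j := by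
        intro j
        have h3 := h' (j - r')
        have e1 : j - r' + r = j + (r - r') := by ring
        have e2 : j - r' + r' = j := by ring
        rwa [e1, e2] at h3
      have hz : r - r' = 0 := free hn (c.out).2 hfree
      have hrr : r = r' := sub_eq_zero.mp hz
      rw [hrr]
    · rintro ⟨w, hw⟩
      have hrel := Quotient.exact
        (Quotient.out_eq (Quotient.mk (rotSetoid n q) ⟨w, hw⟩))
      obtain ⟨r, hr⟩ := hrel
      exact ⟨(Quotient.mk (rotSetoid n q) ⟨w, hw⟩, r),
        Subtype.ext (funext fun i => (hr i).symm)⟩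
  rw [← Nat.card_eq_of_bijective F hF, Nat.card_prod, Nat.card_zmod]
  rfl

end Stmt7Aux

/-- Let `n` and `q` be positive integers.  The additive group
`ZMod n` acts on words of length `n` on `q` letters by rotation:
`(r · w)(i) = w (i + r)`.  Then the number `C_q(n)` of orbits of this rotation
action on the set of primitive words of length `n` on `q` letters satisfies
`n·C_q(n) = Σ_{d | n} μ(d)·q^(n/d)`. -/
theorem stmt7 (n q : ℕ) (hn : 0 < n) (hq : 0 < q) :
    (n : ℤ) * numPrimitiveNecklaces n q =
      ∑ d ∈ n.divisors, ArithmeticFunction.moebius d * (q : ℤ) ^ (n / d) := by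
  have hinv := (ArithmeticFunction.sum_eq_iff_sum_smul_moebius_eq
      (f := fun d => (Nat.card {v : ZMod d → Fin q // WordPrimitive d q v} : ℤ))
      (g := fun m => (q : ℤ) ^ m)).mp ?hsum n hn
  case hsum =>
    intro m hm
    exact_mod_cast Stmt7Aux.sum_card_nat q m hm
  have h1 : ((Nat.card {w : ZMod n → Fin q // WordPrimitive n q w} : ℕ) : ℤ)
      = (n : ℤ) * numPrimitiveNecklaces n q := by
    rw [Stmt7Aux.card_prim hn]
    push_cast
    ring
  rw [← h1, ← hinv,
    Nat.sum_divisorsAntidiagonal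
      (f := fun d e => (ArithmeticFunction.moebius d : ℤ) • (q : ℤ) ^ e)]
  simp [zsmul_eq_mul]
end

section
/- Fix an integer p ≥ 3, set λ = 2cos(π/p), and let k be an odd positive integer. Define q(z) = (z² - λz - 1)^{-k} + (z² + λz - 1)^{-k}. Then q satisfies the rational period function relations of weight 2k on the Hecke group G_p: for every z ∈ ℂ with Im z ≠ 0, q(z) + z^{-2k}·q(-1/z) = 0 and Σ_{j=0}^{p-1} (q |_{2k} U^j)(z) = 0. -/
/-- The weight-`2k` slash operator: for a real 2×2 matrix `M = ((a,b),(c,d))`,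
`(f ∣_{2k} M)(z) = (cz+d)^{-2k} · f((az+b)/(cz+d))`. -/
noncomputable def slash (k : ℕ) (M : Matrix (Fin 2) (Fin 2) ℝ)
    (f : ℂ → ℂ) (z : ℂ) : ℂ :=
  ((M 1 0 : ℂ) * z + (M 1 1 : ℂ)) ^ (-(2 * (k : ℤ))) *
    f (((M 0 0 : ℂ) * z + (M 0 1 : ℂ)) / ((M 1 0 : ℂ) * z + (M 1 1 : ℂ)))

/-- Auxiliary Chebyshev-like sequence: `tseq lam j = sin((j-1)θ)/sin θ` when `lam = 2cos θ`. -/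
noncomputable def tseq (lam : ℝ) : ℕ → ℝ
  | 0 => -1
  | 1 => 0
  | (n+2) => lam * tseq lam (n+1) - tseq lam n

lemma tseq_zero (lam : ℝ) : tseq lam 0 = -1 := rfl
lemma tseq_one (lam : ℝ) : tseq lam 1 = 0 := rfl
lemma tseq_add_two (lam : ℝ) (n : ℕ) : tseq lam (n+2) = lam * tseq lam (n+1) - tseq lam n := rfl

lemma tseq_det (lam : ℝ) (j : ℕ) :
    tseq lam (j+1) ^ 2 - tseq lam (j+2) * tseq lam j = 1 := by
  induction j with
  | zero => simp [tseq_zero, tseq_one, tseq_add_two]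
  | succ n ih =>
      have hn : tseq lam n = lam * tseq lam (n+1) - tseq lam (n+2) := by
        rw [tseq_add_two]; ring
      rw [hn] at ih
      rw [tseq_add_two lam (n+1)]
      linear_combination ih

lemma tseq_pair_ne (lam : ℝ) (j : ℕ) :
    tseq lam (j+1) ≠ 0 ∨ tseq lam j ≠ 0 := by
  by_contra h
  push_neg at h
  have := tseq_det lam j
  rw [h.1, h.2] at this
  norm_num at this

lemma tseq_sin (θ : ℝ) (j : ℕ) :
    Real.sin θ * tseq (2 * Real.cos θ) (j + 1) = Real.sin (j * θ) := by
  induction j using Nat.strong_induction_on with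
  | _ j ih =>
    match j with
    | 0 => simp [tseq]
    | 1 => simp [tseq]
    | (n+2) =>
        have h1 := ih (n+1) (by omega)
        have h0 := ih n (by omega)
        rw [tseq_add_two]
        have he : ((n:ℝ)+2) * θ = ((n:ℝ)+1) * θ + θ := by ring
        push_cast
        rw [he, Real.sin_add]
        have hn : (n:ℝ) * θ = ((n:ℝ)+1) * θ - θ := by ring
        rw [hn, Real.sin_sub] at h0
        push_cast at h1
        linear_combination 2 * Real.cos θ * h1 - h0

lemma U_pow (lam : ℝ) (U : Matrix (Fin 2) (Fin 2) ℝ) (hU : U = !![lam, -1; 1, 0]) (j : ℕ) :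
    U ^ j = !![tseq lam (j+2), -(tseq lam (j+1)); tseq lam (j+1), -(tseq lam j)] := by
  induction j with
  | zero =>
      ext i l
      fin_cases i <;> fin_cases l <;>
        simp [pow_zero, tseq_zero, tseq_one, tseq_add_two, Matrix.one_apply]
  | succ n ih =>
      rw [pow_succ, ih, hU]
      ext i l
      fin_cases i <;> fin_cases l <;>
        simp [Matrix.mul_apply, Fin.sum_univ_two, tseq_add_two] <;> ring

lemma keyzpow (B X : ℂ) (hB : B ≠ 0) (k : ℕ) (hk : 0 < k) :
    B ^ (-(2*(k:ℤ))) * (X / B^2) ^ (-(k:ℤ)) = X ^ (-(k:ℤ)) := by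
  rcases eq_or_ne X 0 with hX | hX
  · simp [hX, div_pow, zero_div, zero_zpow _ (by omega : -((k:ℤ)) ≠ 0)]
  · have h2 : (B:ℂ)^2 ≠ 0 := pow_ne_zero _ hB
    have e : ((2:ℤ) * (k:ℤ)) = ((2*k : ℕ) : ℤ) := by push_cast; ring
    rw [div_zpow, zpow_neg, zpow_neg, zpow_neg, e, zpow_natCast, zpow_natCast,
      zpow_natCast, pow_mul]
    field_simp

lemma denom_ne (c d : ℝ) (z : ℂ) (hz : z.im ≠ 0) (h : c ≠ 0 ∨ d ≠ 0) :
    (c:ℂ) * z - (d:ℂ) ≠ 0 := by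
  intro h0
  have him : c * z.im = 0 := by
    have := congrArg Complex.im h0
    simpa using this
  have hc : c = 0 := by
    rcases mul_eq_zero.mp him with h | h
    · exact h
    · exact absurd h hz
  have hre : -(d:ℝ) = 0 := by
    have := congrArg Complex.re h0
    simpa [hc] using this
  rcases h with h | h
  · exact h hc
  · exact h (by linarith)

/-- The telescoping quadratic: `Pf lam j z = (cz+d)² Q₁((az+b)/(cz+d))` for `U^j`. -/
noncomputable def Pf (lam : ℝ) (j : ℕ) (z : ℂ) : ℂ :=
  ((tseq lam (j+2) : ℂ) * z - (tseq lam (j+1) : ℂ))^2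
  - (lam:ℂ) * ((tseq lam (j+2) : ℂ) * z - (tseq lam (j+1) : ℂ))
      * ((tseq lam (j+1) : ℂ) * z - (tseq lam j : ℂ))
  - ((tseq lam (j+1) : ℂ) * z - (tseq lam j : ℂ))^2


lemma slash_term (lam : ℝ) (U : Matrix (Fin 2) (Fin 2) ℝ) (hU : U = !![lam, -1; 1, 0])
    (k : ℕ) (hk : 0 < k) (hkodd : Odd k)
    (q : ℂ → ℂ)
    (hq : ∀ z : ℂ, q z =
      (z ^ 2 - (lam : ℂ) * z - 1) ^ (-(k : ℤ)) +
      (z ^ 2 + (lam : ℂ) * z - 1) ^ (-(k : ℤ)))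
    (z : ℂ) (hz : z.im ≠ 0) (j : ℕ) :
    slash k (U ^ j) q z = (Pf lam j z) ^ (-(k:ℤ)) - (Pf lam (j+1) z) ^ (-(k:ℤ)) := by
  rw [U_pow lam U hU j]
  set A : ℂ := (tseq lam (j+2) : ℂ) * z - (tseq lam (j+1) : ℂ) with hA
  set B : ℂ := (tseq lam (j+1) : ℂ) * z - (tseq lam j : ℂ) with hB
  have hBne : B ≠ 0 := denom_ne _ _ z hz (tseq_pair_ne lam j)
  have hslash : slash k !![tseq lam (j+2), -(tseq lam (j+1)); tseq lam (j+1), -(tseq lam j)] q z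
      = B ^ (-(2 * (k : ℤ))) * q (A / B) := by
    simp [slash, hA, hB, sub_eq_add_neg]
  rw [hslash, hq (A / B)]
  have e1 : (A/B)^2 - (lam:ℂ) * (A/B) - 1 = (A^2 - lam * A * B - B^2) / B^2 := by
    field_simp
  have e2 : (A/B)^2 + (lam:ℂ) * (A/B) - 1 = (A^2 + lam * A * B - B^2) / B^2 := by
    field_simp
  rw [e1, e2, mul_add, keyzpow B _ hBne k hk, keyzpow B _ hBne k hk]
  have hP1 : A^2 - (lam:ℂ) * A * B - B^2 = Pf lam j z := by rw [Pf]
  have hrec1 : (tseq lam (j+3) : ℂ) = (lam:ℂ) * (tseq lam (j+2)) - (tseq lam (j+1)) := by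
    rw [show j+3 = (j+1)+2 from rfl, tseq_add_two]; push_cast; ring
  have hrec0 : (tseq lam (j+2) : ℂ) = (lam:ℂ) * (tseq lam (j+1)) - (tseq lam j) := by
    rw [tseq_add_two]; push_cast; ring
  have hAB : (tseq lam (j+3) : ℂ) * z - (tseq lam (j+2) : ℂ) = (lam:ℂ) * A - B := by
    rw [hA, hB]
    linear_combination z * hrec1 - hrec0
  have hP2 : -(Pf lam (j+1) z) = A^2 + (lam:ℂ) * A * B - B^2 := by
    rw [Pf, show (j+1)+2 = j+3 from rfl, show (j+1)+1 = j+2 from rfl, hAB, ← hA]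
    ring
  have hodd : Odd (-(k:ℤ)) := ((Int.odd_coe_nat k).mpr hkodd).neg
  rw [hP1, ← hP2, hodd.neg_zpow]
  ring


/-- Fix an integer `p ≥ 3`, set `λ = 2cos(π/p)`, and let `k` be an
odd positive integer.  Define `q(z) = (z² - λz - 1)^{-k} + (z² + λz - 1)^{-k}`.
Then `q` satisfies the rational period function relations of weight `2k` on the
Hecke group `G_p`: for every `z ∈ ℂ` with `Im z ≠ 0`,
`q(z) + z^{-2k}·q(-1/z) = 0` and `Σ_{j=0}^{p-1} (q ∣_{2k} U^j)(z) = 0`. -/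
theorem stmt8 (p : ℕ) (hp : 3 ≤ p)
    (lam : ℝ) (hlam : lam = 2 * Real.cos (Real.pi / p))
    (U : Matrix (Fin 2) (Fin 2) ℝ) (hU : U = !![lam, -1; 1, 0])
    (k : ℕ) (hk : 0 < k) (hkodd : Odd k)
    (q : ℂ → ℂ)
    (hq : ∀ z : ℂ, q z =
      (z ^ 2 - (lam : ℂ) * z - 1) ^ (-(k : ℤ)) +
      (z ^ 2 + (lam : ℂ) * z - 1) ^ (-(k : ℤ))) :
    ∀ z : ℂ, z.im ≠ 0 →
      q z + z ^ (-(2 * (k : ℤ))) * q (-1 / z) = 0 ∧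
      ∑ j ∈ Finset.range p, slash k (U ^ j) q z = 0 := by
  intro z hz
  have hz0 : z ≠ 0 := fun h => hz (by simp [h])
  have hodd : Odd (-(k:ℤ)) := ((Int.odd_coe_nat k).mpr hkodd).neg
  constructor
  · -- first relation
    rw [hq z, hq (-1/z)]
    have e1 : (-1/z)^2 - (lam:ℂ) * (-1/z) - 1 = (-(z^2 - lam*z - 1)) / z^2 := by
      field_simp; ring
    have e2 : (-1/z)^2 + (lam:ℂ) * (-1/z) - 1 = (-(z^2 + lam*z - 1)) / z^2 := by
      field_simp; ring
    rw [e1, e2, mul_add, keyzpow z _ hz0 k hk, keyzpow z _ hz0 k hk,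
      hodd.neg_zpow, hodd.neg_zpow]
    ring
  · -- second relation
    have hsum : ∑ j ∈ Finset.range p, slash k (U ^ j) q z
        = ∑ j ∈ Finset.range p, ((Pf lam j z) ^ (-(k:ℤ)) - (Pf lam (j+1) z) ^ (-(k:ℤ))) :=
      Finset.sum_congr rfl fun j _ => slash_term lam U hU k hk hkodd q hq z hz j
    rw [hsum, Finset.sum_range_sub' (fun j => (Pf lam j z) ^ (-(k:ℤ))) p]
    -- boundary values of tseq
    set θ := Real.pi / p with hθ
    have hppos : (0:ℝ) < (p:ℝ) := by
      have : 0 < p := by omega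
      exact_mod_cast this
    have hθpos : 0 < θ := div_pos Real.pi_pos hppos
    have hθlt : θ < Real.pi := by
      rw [hθ]
      apply div_lt_self Real.pi_pos
      have : (1:ℕ) < p := by omega
      exact_mod_cast this
    have hsin : Real.sin θ ≠ 0 := ne_of_gt (Real.sin_pos_of_pos_of_lt_pi hθpos hθlt)
    have hlam' : lam = 2 * Real.cos θ := hlam
    have h1 : tseq lam (p+1) = 0 := by
      have hs := tseq_sin θ p
      rw [← hlam'] at hs
      have hpθ : (p:ℝ) * θ = Real.pi := by rw [hθ]; field_simp
      rw [hpθ, Real.sin_pi] at hs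
      exact (mul_eq_zero.mp hs).resolve_left hsin
    have h2 : tseq lam (p+2) = -1 := by
      have hs := tseq_sin θ (p+1)
      rw [← hlam'] at hs
      have hpθ : (((p:ℕ)+1:ℕ):ℝ) * θ = Real.pi + θ := by
        push_cast
        rw [hθ]
        field_simp
      rw [hpθ, Real.sin_add, Real.sin_pi, Real.cos_pi] at hs
      have hs' : Real.sin θ * tseq lam (p+1+1) = Real.sin θ * (-1) := by
        rw [hs]; ring
      exact mul_left_cancel₀ hsin hs'
    have h0 : tseq lam p = 1 := by
      have hp1' : p - 1 + 1 = p := by omega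
      have hs := tseq_sin θ (p-1)
      rw [← hlam', hp1'] at hs
      have hpθ : ((p-1:ℕ):ℝ) * θ = Real.pi - θ := by
        rw [Nat.cast_sub (by omega : 1 ≤ p)]
        rw [hθ]
        field_simp
        ring
      rw [hpθ, Real.sin_pi_sub] at hs
      have hs' : Real.sin θ * tseq lam p = Real.sin θ * 1 := by rw [hs]; ring
      exact mul_left_cancel₀ hsin hs'
    have ht2 : tseq lam 2 = 1 := by
      rw [show (2:ℕ) = 0 + 2 from rfl, tseq_add_two, tseq_one, tseq_zero]; ring
    have hPP : Pf lam p z = Pf lam 0 z := by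
      rw [Pf, Pf, h1, h2, h0, tseq_zero, tseq_one, ht2]
      push_cast
      ring
    rw [hPP, sub_self]
end

section
/- Fix an integer p ≥ 5, set λ = 2cos(π/p), and let k be an odd positive integer. Define q(z) = (z² + (2/λ - λ)z - 1)^{-k} + (z² + (λ - 2/λ)z - 1)^{-k}. Then q satisfies the rational period function relations of weight 2k on the Hecke group G_p: for every z ∈ ℂ with Im z ≠ 0, q(z) + z^{-2k}·q(-1/z) = 0 and Σ_{j=0}^{p-1} (q |_{2k} U^j)(z) = 0. -/
section aux
lemma tele (a : ℕ → ℂ) (n : ℕ) :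
    ∑ j ∈ Finset.range n, (a j - a (j+2)) = a 0 + a 1 - a n - a (n+1) := by
  induction n with
  | zero => simp
  | succ n ih => rw [Finset.sum_range_succ, ih]; ring

lemma neg_zpow_odd (k : ℕ) (hk : Odd k) (Q : ℂ) : (-Q) ^ (-(k:ℤ)) = -Q ^ (-(k:ℤ)) := by
  rw [zpow_neg, zpow_neg, zpow_natCast, zpow_natCast, hk.neg_pow, inv_neg]

lemma key (k : ℕ) (z P Q : ℂ) (hz : z ≠ 0) (hPQ : P = Q / z^2) :
    z ^ (-(2*(k:ℤ))) * P ^ (-(k:ℤ)) = Q ^ (-(k:ℤ)) := by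
  subst hPQ
  have hz2 : (z^2 : ℂ) ^ (-(k:ℤ)) = z ^ (-(2*(k:ℤ))) := by
    rw [← zpow_natCast z 2, ← zpow_mul]; ring_nf
  rw [div_zpow, hz2, div_eq_mul_inv, mul_comm (Q ^ _), ← mul_assoc,
    mul_inv_cancel₀ (zpow_ne_zero _ hz), one_mul]

lemma line_ne_zero (a b : ℝ) (z : ℂ) (hz : z.im ≠ 0) (hab : a ≠ 0 ∨ b ≠ 0) :
    (a:ℂ) * z + (b:ℂ) ≠ 0 := by
  intro h
  have him : a * z.im = 0 := by
    have := congrArg Complex.im h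
    simpa using this
  have ha : a = 0 := by
    rcases mul_eq_zero.1 him with h' | h'
    · exact h'
    · exact absurd h' hz
  subst ha
  have : (b:ℂ) = 0 := by simpa using h
  rcases hab with h' | h'
  · exact h' rfl
  · exact h' (by exact_mod_cast this)

lemma denom_ne_zero (M : Matrix (Fin 2) (Fin 2) ℝ) (hdet : M.det = 1) (z : ℂ) (hz : z.im ≠ 0) :
    ((M 1 0 : ℂ) * z + (M 1 1 : ℂ)) ≠ 0 := by
  apply line_ne_zero _ _ _ hz
  by_contra hcon
  push_neg at hcon
  rw [Matrix.det_fin_two] at hdet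
  rw [hcon.1, hcon.2] at hdet
  simp at hdet

lemma moebius_im_ne_zero (M : Matrix (Fin 2) (Fin 2) ℝ) (hdet : M.det = 1) (z : ℂ) (hz : z.im ≠ 0) :
    ((((M 0 0 : ℂ)) * z + (M 0 1 : ℂ)) / ((M 1 0 : ℂ) * z + (M 1 1 : ℂ))).im ≠ 0 := by
  have hden := denom_ne_zero M hdet z hz
  rw [Complex.div_im]
  have hnormSq : Complex.normSq ((M 1 0 : ℂ) * z + (M 1 1 : ℂ)) ≠ 0 :=
    fun h => hden (Complex.normSq_eq_zero.1 h)
  have hnum : ((M 0 0 : ℂ) * z + (M 0 1 : ℂ)).im * ((M 1 0 : ℂ) * z + (M 1 1 : ℂ)).re -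
      ((M 0 0 : ℂ) * z + (M 0 1 : ℂ)).re * ((M 1 0 : ℂ) * z + (M 1 1 : ℂ)).im
      = M.det * z.im := by
    rw [Matrix.det_fin_two]
    simp [Complex.add_im, Complex.add_re, Complex.mul_re, Complex.mul_im, Complex.ofReal_re,
      Complex.ofReal_im]
    ring
  rw [div_sub_div_same, hnum, hdet, one_mul]
  exact div_ne_zero hz hnormSq

lemma slash_one (k : ℕ) (f : ℂ → ℂ) (z : ℂ) : slash k 1 f z = f z := by
  simp [slash, Matrix.one_apply]

lemma slash_neg_one (k : ℕ) (f : ℂ → ℂ) (z : ℂ) : slash k (-1) f z = f z := by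
  have h0 : ((-1 : Matrix (Fin 2) (Fin 2) ℝ) 1 0) = 0 := by simp [Matrix.one_apply]
  have h1 : ((-1 : Matrix (Fin 2) (Fin 2) ℝ) 1 1) = -1 := by simp [Matrix.one_apply]
  have h2 : ((-1 : Matrix (Fin 2) (Fin 2) ℝ) 0 0) = -1 := by simp [Matrix.one_apply]
  have h3 : ((-1 : Matrix (Fin 2) (Fin 2) ℝ) 0 1) = 0 := by simp [Matrix.one_apply]
  simp only [slash, h0, h1, h2, h3]
  push_cast
  rw [show (-(2*(k:ℤ))) = 2*(-(k:ℤ)) by ring, zpow_mul]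
  norm_num

lemma slash_sub (k : ℕ) (M : Matrix (Fin 2) (Fin 2) ℝ) (f g : ℂ → ℂ) (z : ℂ) :
    slash k M (fun w => f w - g w) z = slash k M f z - slash k M g z := by
  simp [slash, mul_sub]

lemma slash_congr (k : ℕ) (M : Matrix (Fin 2) (Fin 2) ℝ) (f g : ℂ → ℂ) (z : ℂ)
    (h : f (((M 0 0 : ℂ) * z + (M 0 1 : ℂ)) / ((M 1 0 : ℂ) * z + (M 1 1 : ℂ))) =
      g (((M 0 0 : ℂ) * z + (M 0 1 : ℂ)) / ((M 1 0 : ℂ) * z + (M 1 1 : ℂ)))) :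
    slash k M f z = slash k M g z := by
  simp only [slash, h]

lemma slash_comp (k : ℕ) (hk : 0 < k) (M N : Matrix (Fin 2) (Fin 2) ℝ) (f : ℂ → ℂ) (z : ℂ)
    (hN : (N 1 0 : ℂ) * z + (N 1 1 : ℂ) ≠ 0) :
    slash k (M * N) f z = slash k N (slash k M f) z := by
  have e : ∀ i j, (((M * N) i j : ℝ) : ℂ) = (M i 0 : ℂ) * (N 0 j : ℂ) + (M i 1 : ℂ) * (N 1 j : ℂ) := by
    intro i j
    push_cast [Matrix.mul_apply, Fin.sum_univ_two]
    ring
  simp only [slash, e]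
  set D := (N 1 0 : ℂ) * z + (N 1 1 : ℂ) with hD
  set w := ((N 0 0 : ℂ) * z + (N 0 1 : ℂ)) / D with hw
  have hE : ((M 1 0 : ℂ) * (N 0 0 : ℂ) + (M 1 1 : ℂ) * (N 1 0 : ℂ)) * z +
      ((M 1 0 : ℂ) * (N 0 1 : ℂ) + (M 1 1 : ℂ) * (N 1 1 : ℂ)) =
      ((M 1 0 : ℂ) * w + (M 1 1 : ℂ)) * D := by
    rw [hw]; field_simp; ring
  rw [hE]
  by_cases hc : (M 1 0 : ℂ) * w + (M 1 1 : ℂ) = 0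
  · rw [hc]
    have hne : (-(2*(k:ℤ))) ≠ 0 := by omega
    simp [zero_zpow _ hne]
  · have hED : ((M 1 0 : ℂ) * w + (M 1 1 : ℂ)) * D ≠ 0 := mul_ne_zero hc hN
    have harg : (((M 0 0 : ℂ) * (N 0 0 : ℂ) + (M 0 1 : ℂ) * (N 1 0 : ℂ)) * z +
        ((M 0 0 : ℂ) * (N 0 1 : ℂ) + (M 0 1 : ℂ) * (N 1 1 : ℂ))) /
        (((M 1 0 : ℂ) * w + (M 1 1 : ℂ)) * D) =
        ((M 0 0 : ℂ) * w + (M 0 1 : ℂ)) / ((M 1 0 : ℂ) * w + (M 1 1 : ℂ)) := by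
      rw [hw]; field_simp; ring
    rw [harg, mul_zpow]
    ring

lemma U_pow_smul (θ : ℝ) (U : Matrix (Fin 2) (Fin 2) ℝ)
    (hU : U = !![2*Real.cos θ, -1; 1, 0]) (j : ℕ) :
    Real.sin θ • U ^ j =
      !![Real.sin (((j:ℝ)+1)*θ), -Real.sin ((j:ℝ)*θ);
         Real.sin ((j:ℝ)*θ), -Real.sin (((j:ℝ)-1)*θ)] := by
  induction j with
  | zero =>
    ext i j'
    fin_cases i <;> fin_cases j' <;>
      simp [Matrix.one_apply, Matrix.smul_apply]
  | succ n ih =>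
    rw [pow_succ, ← smul_mul_assoc, ih, hU, Matrix.mul_fin_two]
    ext i j'
    fin_cases i <;> fin_cases j' <;> push_cast <;>
      simp only [Matrix.cons_val_zero, Matrix.cons_val_one, Matrix.head_cons, Matrix.head_fin_const,
        Matrix.cons_val', Matrix.empty_val', Matrix.cons_val_fin_one, Matrix.of_apply]
    · rw [show ((n:ℝ)+1+1)*θ = ((n:ℝ)+1)*θ+θ by ring, show ((n:ℝ))*θ = ((n:ℝ)+1)*θ-θ by ring,
        Real.sin_add, Real.sin_sub]
      ring
    · ring
    · rw [show ((n:ℝ)+1)*θ = (n:ℝ)*θ+θ by ring, show ((n:ℝ)-1)*θ = (n:ℝ)*θ-θ by ring,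
        Real.sin_add, Real.sin_sub]
      ring
    · rw [show ((n:ℝ)+1-1)*θ = (n:ℝ)*θ by ring]
      ring

lemma U_pow_p (p : ℕ) (hp : 5 ≤ p) (U : Matrix (Fin 2) (Fin 2) ℝ)
    (hU : U = !![2*Real.cos (Real.pi/p), -1; 1, 0]) : U ^ p = -1 := by
  set θ := Real.pi / p with hθ
  have hppos : (0:ℝ) < p := by positivity
  have hθpos : 0 < θ := by positivity
  have hθlt : θ < Real.pi := by
    rw [hθ]
    exact div_lt_self Real.pi_pos (by exact_mod_cast by omega : (1:ℝ) < p)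
  have hsin : Real.sin θ ≠ 0 := ne_of_gt (Real.sin_pos_of_pos_of_lt_pi hθpos hθlt)
  have hpθ : (p:ℝ) * θ = Real.pi := by
    rw [hθ]; field_simp
  have h := U_pow_smul θ U hU p
  have h1 : Real.sin (((p:ℝ)+1)*θ) = -Real.sin θ := by
    rw [show ((p:ℝ)+1)*θ = θ + Real.pi by rw [← hpθ]; ring, Real.sin_add_pi]
  have h2 : Real.sin ((p:ℝ)*θ) = 0 := by rw [hpθ, Real.sin_pi]
  have h3 : Real.sin (((p:ℝ)-1)*θ) = Real.sin θ := by
    rw [show ((p:ℝ)-1)*θ = Real.pi - θ by rw [← hpθ]; ring, Real.sin_pi_sub]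
  rw [h1, h2, h3] at h
  apply smul_right_injective (Matrix (Fin 2) (Fin 2) ℝ) hsin
  show Real.sin θ • U ^ p = Real.sin θ • (-1 : Matrix (Fin 2) (Fin 2) ℝ)
  rw [h]
  ext i j'
  fin_cases i <;> fin_cases j' <;> simp [Matrix.one_apply]

noncomputable def pA (L : ℂ) (k : ℕ) (w : ℂ) : ℂ := (w^2 + (2/L - L)*w - 1) ^ (-(k:ℤ))
noncomputable def pB (L : ℂ) (k : ℕ) (w : ℂ) : ℂ := (w^2 + (L - 2/L)*w - 1) ^ (-(k:ℤ))
noncomputable def pC (L : ℂ) (k : ℕ) (w : ℂ) : ℂ := (w^2 - (L + 2/L)*w + 1) ^ (-(k:ℤ))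

end aux


/-- Fix an integer `p ≥ 5`, set `λ = 2cos(π/p)`, and let `k` be an
odd positive integer.  Define
`q(z) = (z² + (2/λ - λ)z - 1)^{-k} + (z² + (λ - 2/λ)z - 1)^{-k}`.
Then `q` satisfies the rational period function relations of weight `2k` on the
Hecke group `G_p`: for every `z ∈ ℂ` with `Im z ≠ 0`,
`q(z) + z^{-2k}·q(-1/z) = 0` and `Σ_{j=0}^{p-1} (q ∣_{2k} U^j)(z) = 0`. -/
theorem stmt9 (p : ℕ) (hp : 5 ≤ p)
    (lam : ℝ) (hlam : lam = 2 * Real.cos (Real.pi / p))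
    (U : Matrix (Fin 2) (Fin 2) ℝ) (hU : U = !![lam, -1; 1, 0])
    (k : ℕ) (hk : 0 < k) (hkodd : Odd k)
    (q : ℂ → ℂ)
    (hq : ∀ z : ℂ, q z =
      (z ^ 2 + (2 / (lam : ℂ) - (lam : ℂ)) * z - 1) ^ (-(k : ℤ)) +
      (z ^ 2 + ((lam : ℂ) - 2 / (lam : ℂ)) * z - 1) ^ (-(k : ℤ))) :
    ∀ z : ℂ, z.im ≠ 0 →
      q z + z ^ (-(2 * (k : ℤ))) * q (-1 / z) = 0 ∧
      ∑ j ∈ Finset.range p, slash k (U ^ j) q z = 0 := by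
  intro z hz
  have hz0 : z ≠ 0 := fun h => hz (by rw [h]; simp)
  -- basic facts about lam
  have hppos : (0:ℝ) < p := by positivity
  have hcos : 0 < Real.cos (Real.pi / p) := by
    apply Real.cos_pos_of_mem_Ioo
    constructor
    · have : (0:ℝ) < Real.pi / p := by positivity
      linarith [Real.pi_pos]
    · rw [div_lt_div_iff₀ hppos (by norm_num : (0:ℝ) < 2)]
      have : (2:ℝ) < p := by exact_mod_cast by omega
      nlinarith [Real.pi_pos]
  have hlampos : 0 < lam := by rw [hlam]; positivity
  have hL : ((lam : ℝ) : ℂ) ≠ 0 := by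
    exact_mod_cast (ne_of_gt hlampos)
  set L : ℂ := ((lam : ℝ) : ℂ) with hLdef
  -- Part 1
  have part1 : q z + z ^ (-(2 * (k : ℤ))) * q (-1 / z) = 0 := by
    rw [hq z, hq (-1/z), mul_add]
    have e1 : z ^ (-(2*(k:ℤ))) * ((-1/z) ^ 2 + (2/L - L) * (-1/z) - 1) ^ (-(k:ℤ))
        = -(z ^ 2 + (2/L - L) * z - 1) ^ (-(k:ℤ)) := by
      rw [key k z _ (-(z^2 + (2/L - L)*z - 1)) hz0 (by field_simp; ring),
        neg_zpow_odd k hkodd]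
    have e2 : z ^ (-(2*(k:ℤ))) * ((-1/z) ^ 2 + (L - 2/L) * (-1/z) - 1) ^ (-(k:ℤ))
        = -(z ^ 2 + (L - 2/L) * z - 1) ^ (-(k:ℤ)) := by
      rw [key k z _ (-(z^2 + (L - 2/L)*z - 1)) hz0 (by field_simp; ring),
        neg_zpow_odd k hkodd]
    rw [e1, e2]; ring
  refine ⟨part1, ?_⟩
  -- entries of U over ℂ
  have hU00 : ((U 0 0 : ℝ) : ℂ) = L := by rw [hU]; norm_num; rfl
  have hU01 : ((U 0 1 : ℝ) : ℂ) = -1 := by rw [hU]; norm_num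
  have hU10 : ((U 1 0 : ℝ) : ℂ) = 1 := by rw [hU]; norm_num
  have hU11 : ((U 1 1 : ℝ) : ℂ) = 0 := by rw [hU]; norm_num
  have detU : U.det = 1 := by rw [hU, Matrix.det_fin_two_of]; ring
  have hU' : U = !![2*Real.cos (Real.pi/p), -1; 1, 0] := by rw [hU, hlam]
  -- explicit form of slash by U
  have slashU : ∀ (f : ℂ → ℂ) (w : ℂ),
      slash k U f w = w ^ (-(2*(k:ℤ))) * f ((L*w - 1)/w) := by
    intro f w
    simp only [slash, hU00, hU01, hU10, hU11, one_mul, add_zero]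
    rw [show L*w + (-1 : ℂ) = L*w - 1 by ring]
  have hUmoeb : ∀ w : ℂ,
      (((U 0 0 : ℝ):ℂ)*w + ((U 0 1 : ℝ):ℂ)) / (((U 1 0 : ℝ):ℂ)*w + ((U 1 1 : ℝ):ℂ))
        = (L*w - 1)/w := by
    intro w
    rw [hU00, hU01, hU10, hU11, one_mul, add_zero,
      show L*w + (-1 : ℂ) = L*w - 1 by ring]
  -- core identities
  have core1 : ∀ w : ℂ, w.im ≠ 0 → slash k U (pA L k) w = pC L k w := by
    intro w hw
    have hw0 : w ≠ 0 := fun h => hw (by rw [h]; simp)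
    rw [slashU]
    simp only [pA, pC]
    exact key k w _ _ hw0 (by field_simp; ring)
  have core2 : ∀ w : ℂ, w.im ≠ 0 → slash k U (pC L k) w = -pB L k w := by
    intro w hw
    have hw0 : w ≠ 0 := fun h => hw (by rw [h]; simp)
    rw [slashU]
    simp only [pB, pC]
    rw [key k w _ (-(w^2 + (L - 2/L)*w - 1)) hw0 (by field_simp; ring),
      neg_zpow_odd k hkodd]
  -- determinant and denominators for powers
  have hdetUj : ∀ j : ℕ, (U^j).det = 1 := by
    intro j; rw [Matrix.det_pow, detU, one_pow]
  have hden : ∀ j : ℕ, (((U^j) 1 0 : ℝ):ℂ) * z + (((U^j) 1 1 : ℝ):ℂ) ≠ 0 :=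
    fun j => denom_ne_zero _ (hdetUj j) z hz
  have him : ∀ j : ℕ,
      (((((U^j) 0 0 : ℝ):ℂ) * z + (((U^j) 0 1 : ℝ):ℂ)) /
        ((((U^j) 1 0 : ℝ):ℂ) * z + (((U^j) 1 1 : ℝ):ℂ))).im ≠ 0 :=
    fun j => moebius_im_ne_zero _ (hdetUj j) z hz
  have hdenU : ((U 1 0 : ℝ):ℂ) * z + ((U 1 1 : ℝ):ℂ) ≠ 0 := by
    rw [hU10, hU11, one_mul, add_zero]; exact hz0
  -- claim A : q|U = pC - pC|U²  (pointwise on the upper/lower half planes)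
  have claimA : ∀ w : ℂ, w.im ≠ 0 →
      slash k U q w = pC L k w - slash k (U*U) (pC L k) w := by
    intro w hw
    have hw0 : w ≠ 0 := fun h => hw (by rw [h]; simp)
    have hu_im : ((L*w - 1)/w).im ≠ 0 := by
      have := moebius_im_ne_zero U detU w hw
      rwa [hUmoeb w] at this
    have hdenUw : ((U 1 0 : ℝ):ℂ) * w + ((U 1 1 : ℝ):ℂ) ≠ 0 := by
      rw [hU10, hU11, one_mul, add_zero]; exact hw0
    rw [slashU q w, hq ((L*w - 1)/w), mul_add]
    have eA : w ^ (-(2*(k:ℤ))) * (((L*w - 1)/w) ^ 2 + (2/L - L) * ((L*w - 1)/w) - 1) ^ (-(k:ℤ))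
        = pC L k w := by
      simp only [pC]
      exact key k w _ _ hw0 (by field_simp; ring)
    have eB : w ^ (-(2*(k:ℤ))) * (((L*w - 1)/w) ^ 2 + (L - 2/L) * ((L*w - 1)/w) - 1) ^ (-(k:ℤ))
        = -slash k (U*U) (pC L k) w := by
      rw [slash_comp k hk U U (pC L k) w hdenUw, slashU (slash k U (pC L k)) w,
        core2 ((L*w - 1)/w) hu_im]
      simp only [pB]
      ring
    rw [eA, eB]
    ring
  -- step B : terms of the sum telescope
  have stepB : ∀ j : ℕ, slash k (U^(j+1)) q z
      = slash k (U^j) (pC L k) z - slash k (U^(j+2)) (pC L k) z := by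
    intro j
    rw [pow_succ', slash_comp k hk U (U^j) q z (hden j),
      slash_congr k (U^j) (slash k U q) (fun w => pC L k w - slash k (U*U) (pC L k) w) z
        (claimA _ (him j)),
      slash_sub, ← slash_comp k hk (U*U) (U^j) (pC L k) z (hden j),
      show U*U*U^j = U^(j+2) by rw [show j+2 = 2+j by omega, pow_add, pow_two]]
  -- step C : q z in terms of the telescoping sequence
  have hG1 : slash k (U^1) (pC L k) z = -pB L k z := by
    rw [pow_one]; exact core2 z hz
  have hGp1 : slash k (U^(p-1)) (pC L k) z = pA L k z := by
    rw [slash_congr k (U^(p-1)) (pC L k) (slash k U (pA L k)) z (core1 _ (him (p-1))).symm,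
      ← slash_comp k hk U (U^(p-1)) (pA L k) z (hden (p-1)),
      show U * U^(p-1) = U^p by rw [← pow_succ']; congr 1; omega,
      U_pow_p p hp U hU', slash_neg_one]
  have hGp : slash k (U^p) (pC L k) z = slash k (U^0) (pC L k) z := by
    rw [U_pow_p p hp U hU', slash_neg_one, pow_zero, slash_one]
  have stepC : q z = slash k (U^(p-1)) (pC L k) z - slash k (U^1) (pC L k) z := by
    rw [hG1, hGp1, hq z]
    simp only [pA, pB]
    ring
  -- assemble the sum
  obtain ⟨n, hn⟩ : ∃ n, p = n + 1 := ⟨p - 1, by omega⟩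
  rw [hn, Finset.sum_range_succ']
  have hsum : ∑ j ∈ Finset.range n, slash k (U^(j+1)) q z
      = ∑ j ∈ Finset.range n,
          (slash k (U^j) (pC L k) z - slash k (U^(j+2)) (pC L k) z) :=
    Finset.sum_congr rfl (fun j _ => stepB j)
  rw [hsum, tele (fun j => slash k (U^j) (pC L k) z) n]
  rw [pow_zero, slash_one, slash_one]
  have hnp : n = p - 1 := by omega
  have hnp1 : n + 1 = p := by omega
  rw [hnp, hnp1] at *
  rw [stepC, hGp]
  rw [pow_zero, slash_one]
  ring
end

section
/- Fix an even integer p ≥ 4, set λ = 2cos(π/p), and let k be an odd positive integer. Define q(z) = (z² - 1)^{-k}. Then q satisfies the rational period function relations of weight 2k on the Hecke group G_p: for every z ∈ ℂ with Im z ≠ 0, q(z) + z^{-2k}·q(-1/z) = 0 and Σ_{j=0}^{p-1} (q |_{2k} U^j)(z) = 0. -/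
lemma denom_ne_s10 (M : Matrix (Fin 2) (Fin 2) ℝ) (hdet : M.det ≠ 0) (z : ℂ) (hz : z.im ≠ 0) :
    (M 1 0 : ℂ) * z + (M 1 1 : ℂ) ≠ 0 := by
  intro h
  have him : (M 1 0) * z.im = 0 := by
    have := congrArg Complex.im h
    simpa using this
  have hc : M 1 0 = 0 := by
    rcases mul_eq_zero.1 him with h' | h'
    · exact h'
    · exact absurd h' hz
  rw [hc] at h
  have hd : M 1 1 = 0 := by
    simpa [Complex.ofReal_eq_zero] using h
  apply hdet
  rw [Matrix.det_fin_two, hc, hd]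
  ring

lemma slash_q_eq (k : ℕ) (hk : 0 < k) (M : Matrix (Fin 2) (Fin 2) ℝ)
    (q : ℂ → ℂ) (hq : ∀ z : ℂ, q z = (z ^ 2 - 1) ^ (-(k : ℤ)))
    (z : ℂ) (hC : (M 1 0 : ℂ) * z + (M 1 1 : ℂ) ≠ 0) :
    slash k M q z =
      ((((M 0 0 : ℂ) * z + (M 0 1 : ℂ)))^2 - (((M 1 0 : ℂ) * z + (M 1 1 : ℂ)))^2) ^ (-(k : ℤ)) := by
  rw [slash, hq]
  set A := (M 0 0 : ℂ) * z + (M 0 1 : ℂ) with hA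
  set C := (M 1 0 : ℂ) * z + (M 1 1 : ℂ) with hCdef
  have h1 : (A / C) ^ 2 - 1 = (A ^ 2 - C ^ 2) / C ^ 2 := by field_simp
  rw [h1]
  have e2 : (-(2 * (k : ℤ))) = -((2 * k : ℕ) : ℤ) := by push_cast; ring
  rw [e2]
  simp only [zpow_neg, zpow_natCast]
  by_cases hX : A ^ 2 - C ^ 2 = 0
  · rw [hX]
    simp [zero_pow hk.ne']
  · rw [div_pow]
    field_simp
    rw [pow_mul]

lemma Upow (θ : ℝ) (hs : Real.sin θ ≠ 0) (lam : ℝ) (hlam : lam = 2 * Real.cos θ)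
    (U : Matrix (Fin 2) (Fin 2) ℝ) (hU : U = !![lam, -1; 1, 0]) (j : ℕ) :
    U ^ j = !![Real.sin (((j:ℝ)+1)*θ)/Real.sin θ, -(Real.sin ((j:ℝ)*θ)/Real.sin θ);
               Real.sin ((j:ℝ)*θ)/Real.sin θ, -(Real.sin (((j:ℝ)-1)*θ)/Real.sin θ)] := by
  induction j with
  | zero =>
    rw [pow_zero, Matrix.one_fin_two]
    norm_num [Real.sin_zero, Real.sin_neg, neg_one_mul, neg_div, div_self hs]
  | succ j ih =>
    rw [pow_succ, ih, hU, hlam, Matrix.mul_fin_two]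
    ext i j'
    fin_cases i <;> fin_cases j' <;> push_cast <;>
      simp only [Matrix.cons_val', Matrix.cons_val_zero, Matrix.cons_val_one, Matrix.head_cons,
        Matrix.empty_val', Matrix.cons_val_fin_one, Matrix.head_fin_const, Matrix.of_apply]
    · rw [show ((j:ℝ)+1+1)*θ = ((j:ℝ)+1)*θ + θ by ring,
        show (j:ℝ)*θ = ((j:ℝ)+1)*θ - θ by ring, Real.sin_add, Real.sin_sub]
      field_simp
      ring
    · ring
    · rw [show ((j:ℝ)+1)*θ = (j:ℝ)*θ + θ by ring,
        show ((j:ℝ)-1)*θ = (j:ℝ)*θ - θ by ring, Real.sin_add, Real.sin_sub]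
      field_simp
      ring
    · rw [show ((j:ℝ)+1-1)*θ = (j:ℝ)*θ by ring]
      ring

lemma flip_eq (θ t : ℝ) (z : ℂ) :
    ((((Real.cos (t + θ) / Real.sin θ : ℝ)) : ℂ) * z + (((-(Real.cos t / Real.sin θ) : ℝ)) : ℂ)) ^ 2 -
      ((((Real.cos t / Real.sin θ : ℝ)) : ℂ) * z + (((-(Real.cos (t - θ) / Real.sin θ) : ℝ)) : ℂ)) ^ 2 =
    -(((((Real.sin (t + θ) / Real.sin θ : ℝ)) : ℂ) * z + (((-(Real.sin t / Real.sin θ) : ℝ)) : ℂ)) ^ 2 -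
      ((((Real.sin t / Real.sin θ : ℝ)) : ℂ) * z + (((-(Real.sin (t - θ) / Real.sin θ) : ℝ)) : ℂ)) ^ 2) := by
  have hcs : ((Real.sin θ : ℝ) : ℂ) ^ 2 + ((Real.cos θ : ℝ) : ℂ) ^ 2 = 1 := by
    exact_mod_cast congrArg (Complex.ofReal) (Real.sin_sq_add_cos_sq θ)
  rw [Real.sin_add, Real.sin_sub, Real.cos_add, Real.cos_sub]
  push_cast [-Complex.ofReal_sin, -Complex.ofReal_cos]
  linear_combination (((Real.sin t : ℝ) : ℂ) ^ 2 + ((Real.cos t : ℝ) : ℂ) ^ 2) * (z ^ 2 - 1) /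
      ((Real.sin θ : ℝ) : ℂ) ^ 2 * hcs

/-- Fix an even integer `p ≥ 4`, set `λ = 2cos(π/p)`, and let `k`
be an odd positive integer.  Define `q(z) = (z² - 1)^{-k}`.  Then `q` satisfies
the rational period function relations of weight `2k` on the Hecke group `G_p`:
for every `z ∈ ℂ` with `Im z ≠ 0`, `q(z) + z^{-2k}·q(-1/z) = 0` and
`Σ_{j=0}^{p-1} (q ∣_{2k} U^j)(z) = 0`. -/
theorem stmt10 (p : ℕ) (hp : 4 ≤ p) (hpeven : Even p)
    (lam : ℝ) (hlam : lam = 2 * Real.cos (Real.pi / p))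
    (U : Matrix (Fin 2) (Fin 2) ℝ) (hU : U = !![lam, -1; 1, 0])
    (k : ℕ) (hk : 0 < k) (hkodd : Odd k)
    (q : ℂ → ℂ)
    (hq : ∀ z : ℂ, q z = (z ^ 2 - 1) ^ (-(k : ℤ))) :
    ∀ z : ℂ, z.im ≠ 0 →
      q z + z ^ (-(2 * (k : ℤ))) * q (-1 / z) = 0 ∧
      ∑ j ∈ Finset.range p, slash k (U ^ j) q z = 0 := by

  intro z hz
  have hz0 : z ≠ 0 := fun h => hz (by simp [h])
  have hz1 : z ^ 2 - 1 ≠ 0 := by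
    intro h
    have h2 : (z - 1) * (z + 1) = 0 := by linear_combination h
    rcases mul_eq_zero.1 h2 with h3 | h3
    · exact hz (by rw [sub_eq_zero.1 h3]; simp)
    · exact hz (by rw [eq_neg_of_add_eq_zero_left h3]; simp)
  constructor
  · rw [hq, hq]
    have key : (-1 / z) ^ 2 - 1 = -(z ^ 2 - 1) / z ^ 2 := by
      field_simp
      ring
    rw [key]
    have e2 : (-(2 * (k : ℤ))) = -((2 * k : ℕ) : ℤ) := by push_cast; ring
    rw [e2]
    simp only [zpow_neg, zpow_natCast]
    have h3 : (-(z ^ 2 - 1) / z ^ 2) ^ k = -((z ^ 2 - 1) ^ k) / (z ^ 2) ^ k := by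
      rw [div_pow, Odd.neg_pow hkodd]
    rw [h3]
    have h4 : (z ^ 2 - 1) ^ k ≠ 0 := pow_ne_zero _ hz1
    field_simp
    rw [pow_mul]
    ring
  · set θ := Real.pi / (p : ℝ) with hθ
    have hp0 : (0:ℝ) < (p:ℝ) := by positivity
    have hp4 : (4:ℝ) ≤ (p:ℝ) := by exact_mod_cast hp
    have hθpos : 0 < θ := by positivity
    have hθlt : θ < Real.pi := by
      rw [hθ, div_lt_iff₀ hp0]
      nlinarith [Real.pi_pos, mul_le_mul_of_nonneg_left hp4 Real.pi_pos.le]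
    have hs : Real.sin θ ≠ 0 := (Real.sin_pos_of_pos_of_lt_pi hθpos hθlt).ne'
    obtain ⟨m, hm⟩ := hpeven
    have hm0 : m ≠ 0 := by omega
    have hm0' : ((m:ℝ)) ≠ 0 := Nat.cast_ne_zero.2 hm0
    have hmθ : (m:ℝ) * θ = Real.pi / 2 := by
      rw [hθ, hm]
      push_cast
      field_simp
      ring
    have hdet : ∀ j : ℕ, (U ^ j).det ≠ 0 := by
      intro j
      rw [Matrix.det_pow]
      have hU1 : U.det = 1 := by rw [hU, Matrix.det_fin_two_of]; ring
      rw [hU1, one_pow]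
      norm_num
    have hC : ∀ j : ℕ, ((U ^ j) 1 0 : ℂ) * z + ((U ^ j) 1 1 : ℂ) ≠ 0 :=
      fun j => denom_ne_s10 _ (hdet j) z hz
    rw [hm, Finset.sum_range_add, ← Finset.sum_add_distrib]
    apply Finset.sum_eq_zero
    intro j hj
    rw [slash_q_eq k hk _ q hq z (hC j), slash_q_eq k hk _ q hq z (hC (m + j)),
      Upow θ hs lam hlam U hU j, Upow θ hs lam hlam U hU (m + j)]
    simp only [Matrix.cons_val', Matrix.cons_val_zero, Matrix.cons_val_one, Matrix.head_cons,
      Matrix.empty_val', Matrix.cons_val_fin_one, Matrix.head_fin_const, Matrix.of_apply]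
    have e1 : (((m + j : ℕ) : ℝ) + 1) * θ = ((j:ℝ)*θ + θ) + Real.pi/2 := by
      rw [← hmθ]; push_cast; ring
    have e2 : ((m + j : ℕ) : ℝ) * θ = (j:ℝ)*θ + Real.pi/2 := by
      rw [← hmθ]; push_cast; ring
    have e3 : (((m + j : ℕ) : ℝ) - 1) * θ = ((j:ℝ)*θ - θ) + Real.pi/2 := by
      rw [← hmθ]; push_cast; ring
    have e4 : ((j:ℝ) + 1) * θ = (j:ℝ)*θ + θ := by ring
    have e5 : ((j:ℝ) - 1) * θ = (j:ℝ)*θ - θ := by ring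
    rw [e1, e2, e3, e4, e5, Real.sin_add_pi_div_two, Real.sin_add_pi_div_two,
      Real.sin_add_pi_div_two, flip_eq θ ((j:ℝ)*θ) z]
    have hodd : ∀ w : ℂ, (-w) ^ (-(k:ℤ)) = -(w ^ (-(k:ℤ))) := by
      intro w
      rw [zpow_neg, zpow_neg, zpow_natCast, zpow_natCast, Odd.neg_pow hkodd, inv_neg]
    rw [hodd]
    ring
end

section
/- Fix an integer p ≥ 5 and set λ = 2cos(π/p), so that λ² - 1 > 0. Define q(z) = 1/(z - √(λ²-1)) - √(λ²-1)/(√(λ²-1)·z + 1). Then q satisfies the rational period function relations of weight 2 on the Hecke group G_p: for every z ∈ ℂ with Im z ≠ 0, q(z) + z^{-2}·q(-1/z) = 0 and Σ_{j=0}^{p-1} (q |_{2} U^j)(z) = 0. (Its poles √(λ²-1) and -1/√(λ²-1) form a single irreducible system of poles without Hecke-symmetry.) -/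
private lemma keyid (A a b c d z : ℂ) (had : a * d - b * c = 1)
    (hczd : c * z + d ≠ 0)
    (hD1 : (a - A * c) * z + (b - A * d) ≠ 0)
    (hD2 : (A * a + c) * z + (A * b + d) ≠ 0) :
    (c * z + d) ^ (-2 : ℤ) *
      (1 / ((a * z + b) / (c * z + d) - A) -
        A / (A * ((a * z + b) / (c * z + d)) + 1)) =
    (a - A * c) / ((a - A * c) * z + (b - A * d)) -
      (A * a + c) / ((A * a + c) * z + (A * b + d)) := by
  have e1 : (a * z + b) / (c * z + d) - A =
      ((a - A * c) * z + (b - A * d)) / (c * z + d) := by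
    rw [eq_div_iff hczd, sub_mul, div_mul_cancel₀ _ hczd]; ring
  have e2 : A * ((a * z + b) / (c * z + d)) + 1 =
      ((A * a + c) * z + (A * b + d)) / (c * z + d) := by
    rw [eq_div_iff hczd, add_mul, mul_assoc, div_mul_cancel₀ _ hczd]; ring
  rw [e1, e2, div_sub_div _ _ hD1 hD2]
  have hnum : (a - A * c) * ((A * a + c) * z + (A * b + d)) -
      ((a - A * c) * z + (b - A * d)) * (A * a + c) = 1 + A ^ 2 := by
    linear_combination (1 + A ^ 2) * had
  rw [hnum, one_div_div, div_div_eq_mul_div,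
    show (c * z + d) ^ (-2 : ℤ) = ((c * z + d) ^ 2)⁻¹ from by
      rw [zpow_neg, zpow_two, pow_two],
    div_sub_div _ _ hD1 hD2,
    show (c * z + d) * ((A * a + c) * z + (A * b + d)) -
        ((a - A * c) * z + (b - A * d)) * (A * (c * z + d)) =
        (1 + A ^ 2) * (c * z + d) ^ 2 from by ring]
  have h2 : ((c * z + d) ^ 2) ≠ 0 := pow_ne_zero _ hczd
  rw [mul_div_assoc', inv_mul_eq_div, mul_div_assoc, div_self h2, mul_one]

private lemma lin_ne {e f : ℝ} (z : ℂ) (hz : z.im ≠ 0) (h : ¬ (e = 0 ∧ f = 0)) :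
    (e : ℂ) * z + (f : ℂ) ≠ 0 := by
  intro h0
  rcases eq_or_ne e 0 with he | he
  · rw [he] at h0
    simp only [Complex.ofReal_zero, zero_mul, zero_add] at h0
    exact h ⟨he, by exact_mod_cast h0⟩
  · have him : ((e : ℂ) * z + (f : ℂ)).im = e * z.im := by
      simp [Complex.add_im, Complex.mul_im]
    rw [h0] at him
    rcases mul_eq_zero.mp him.symm with h' | h'
    · exact he h'
    · exact hz h'

private lemma slash_term_s11 (A a b c d : ℝ) (had : a * d - b * c = 1) (z : ℂ)
    (hz : z.im ≠ 0) :
    ((c : ℂ) * z + (d : ℂ)) ^ (-2 : ℤ) *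
      (1 / (((a : ℂ) * z + (b : ℂ)) / ((c : ℂ) * z + (d : ℂ)) - (A : ℂ)) -
        (A : ℂ) / ((A : ℂ) * (((a : ℂ) * z + (b : ℂ)) / ((c : ℂ) * z + (d : ℂ))) + 1)) =
    ((a - A * c : ℝ) : ℂ) / (((a - A * c : ℝ) : ℂ) * z + ((b - A * d : ℝ) : ℂ)) -
      ((A * a + c : ℝ) : ℂ) / (((A * a + c : ℝ) : ℂ) * z + ((A * b + d : ℝ) : ℂ)) := by
  have hcd : ¬ (c = 0 ∧ d = 0) := by
    rintro ⟨h1, h2⟩; rw [h1, h2] at had; simp at had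
  have h1 : ¬ ((a - A * c) = 0 ∧ (b - A * d) = 0) := by
    rintro ⟨h1, h2⟩
    exact one_ne_zero (by linear_combination d * h1 - c * h2 - had : (1 : ℝ) = 0)
  have h2 : ¬ ((A * a + c) = 0 ∧ (A * b + d) = 0) := by
    rintro ⟨h1, h2⟩
    exact one_ne_zero (by linear_combination a * h2 - b * h1 - had : (1 : ℝ) = 0)
  have hczd : (c : ℂ) * z + (d : ℂ) ≠ 0 := lin_ne z hz hcd
  have hD1 := lin_ne (e := a - A * c) (f := b - A * d) z hz h1
  have hD2 := lin_ne (e := A * a + c) (f := A * b + d) z hz h2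
  have hadC : (a : ℂ) * d - b * c = 1 := by exact_mod_cast had
  push_cast at hD1 hD2 ⊢
  exact keyid (A : ℂ) a b c d z hadC hczd hD1 hD2

private lemma negG (e f : ℝ) (z : ℂ) :
    ((-e : ℝ) : ℂ) / (((-e : ℝ) : ℂ) * z + ((-f : ℝ) : ℂ)) =
      ((e : ℝ) : ℂ) / (((e : ℝ) : ℂ) * z + ((f : ℝ) : ℂ)) := by
  push_cast
  rw [show -(e : ℂ) * z + -(f : ℂ) = -((e : ℂ) * z + f) from by ring, neg_div_neg_eq]

private lemma cancelG (r x y : ℝ) (hr : r ≠ 0) (z : ℂ) :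
    ((r * x : ℝ) : ℂ) / (((r * x : ℝ) : ℂ) * z + ((r * y : ℝ) : ℂ)) =
      ((x : ℝ) : ℂ) / (((x : ℝ) : ℂ) * z + ((y : ℝ) : ℂ)) := by
  have hrC : (r : ℂ) ≠ 0 := by exact_mod_cast hr
  push_cast
  rw [show (r : ℂ) * x * z + r * y = r * ((x : ℂ) * z + y) from by ring,
    mul_div_mul_left _ _ hrC]

/-- Fix an integer `p ≥ 5` and set `λ = 2cos(π/p)`, so that
`λ² - 1 > 0`.  Define
`q(z) = 1/(z - √(λ²-1)) - √(λ²-1)/(√(λ²-1)·z + 1)`.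
Then `q` satisfies the rational period function relations of weight `2` on the
Hecke group `G_p`: for every `z ∈ ℂ` with `Im z ≠ 0`,
`q(z) + z^{-2}·q(-1/z) = 0` and `Σ_{j=0}^{p-1} (q ∣_2 U^j)(z) = 0`. -/
theorem stmt11 (p : ℕ) (hp : 5 ≤ p)
    (lam : ℝ) (hlam : lam = 2 * Real.cos (Real.pi / p))
    (hlam1 : lam ^ 2 - 1 > 0)
    (U : Matrix (Fin 2) (Fin 2) ℝ) (hU : U = !![lam, -1; 1, 0])
    (q : ℂ → ℂ)
    (hq : ∀ z : ℂ, q z =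
      1 / (z - (Real.sqrt (lam ^ 2 - 1) : ℂ)) -
      (Real.sqrt (lam ^ 2 - 1) : ℂ) / ((Real.sqrt (lam ^ 2 - 1) : ℂ) * z + 1)) :
    ∀ z : ℂ, z.im ≠ 0 →
      q z + z ^ (-2 : ℤ) * q (-1 / z) = 0 ∧
      ∑ j ∈ Finset.range p, slash 1 (U ^ j) q z = 0 := by
  intro z hz
  set A := Real.sqrt (lam ^ 2 - 1) with hAdef
  have hA2 : A ^ 2 = lam ^ 2 - 1 := Real.sq_sqrt (le_of_lt hlam1)
  have hApos : 0 < A := Real.sqrt_pos.mpr hlam1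
  have hz0 : z ≠ 0 := by
    intro h; apply hz; rw [h]; exact Complex.zero_im
  -- First relation
  have hrel1 : q z + z ^ (-2 : ℤ) * q (-1 / z) = 0 := by
    rw [hq z, hq (-1 / z)]
    have h2 : z - (A : ℂ) ≠ 0 := by
      intro h; apply hz; rw [sub_eq_zero] at h; rw [h]; exact Complex.ofReal_im A
    have h3 : (A : ℂ) * z + 1 ≠ 0 := by
      have : ¬ (A = 0 ∧ (1:ℝ) = 0) := by rintro ⟨h', -⟩; exact (ne_of_gt hApos) h'
      simpa using lin_ne (e := A) (f := (1:ℝ)) z hz this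
    have e1 : -1 / z - (A : ℂ) = -((A : ℂ) * z + 1) / z := by
      field_simp; ring
    have e2 : (A : ℂ) * (-1 / z) + 1 = (z - (A : ℂ)) / z := by
      field_simp
      ring
    rw [e1, e2,
      show z ^ (-2 : ℤ) = (z ^ 2)⁻¹ from by rw [zpow_neg, zpow_two, pow_two],
      one_div_div, div_div_eq_mul_div, div_neg]
    have ha := mul_inv_cancel₀ h2
    have hb := mul_inv_cancel₀ h3
    have hc := mul_inv_cancel₀ hz0
    simp only [div_eq_mul_inv, ← inv_pow]
    linear_combination z⁻¹ * ha - z⁻¹ * hb + (-(z - (A:ℂ))⁻¹ + (A:ℂ) * ((A:ℂ) * z + 1)⁻¹ - z⁻¹ * ((A:ℂ) * z + 1)⁻¹ - (A:ℂ) * z⁻¹ * (z - (A:ℂ))⁻¹) * hc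
  refine ⟨hrel1, ?_⟩
  -- trig / powers of U
  have hppos : (0:ℝ) < p := by
    have : (5:ℝ) ≤ p := by exact_mod_cast hp
    linarith
  have hx0 : 0 < Real.pi / p := div_pos Real.pi_pos hppos
  have hxlt : Real.pi / p < Real.pi := by
    rw [div_lt_iff₀ hppos]
    have h5 : (5:ℝ) ≤ (p:ℝ) := by exact_mod_cast hp
    nlinarith [Real.pi_pos]
  set x := Real.pi / p with hxdef
  have hs : Real.sin x ≠ 0 := ne_of_gt (Real.sin_pos_of_pos_of_lt_pi hx0 hxlt)
  set t : ℕ → ℝ := fun j => Real.sin (j * x) / Real.sin x with ht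
  have trig : ∀ y : ℝ, Real.sin ((y + 2) * x) =
      2 * Real.cos x * Real.sin ((y + 1) * x) - Real.sin (y * x) := by
    intro y
    rw [show (y + 2) * x = (y + 1) * x + x from by ring,
      show y * x = (y + 1) * x - x from by ring,
      Real.sin_add, Real.sin_sub]
    ring
  have hrec : ∀ j : ℕ, lam * t (j + 1) - t j = t (j + 2) := by
    intro j
    simp only [ht]
    rw [hlam]
    push_cast
    rw [trig (j : ℝ)]
    field_simp
  have hUpow : ∀ j : ℕ, U ^ (j + 1) = !![t (j + 2), -(t (j + 1)); t (j + 1), -(t j)] := by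
    intro j
    induction j with
    | zero =>
      have h0 : t 0 = 0 := by simp [ht]
      have h1 : t 1 = 1 := by
        simp only [ht]
        norm_num [div_self hs]
      have h2 : t 2 = lam := by
        simp only [ht]
        rw [hlam]
        push_cast
        rw [show (2:ℝ) * x = x + x from by ring, Real.sin_add]
        field_simp
        ring
      rw [pow_one, hU, h0, h1, h2]
      norm_num
    | succ n ih =>
      rw [pow_succ, ih, hU, Matrix.mul_fin_two]
      have e1 := hrec (n + 1)
      have e2 := hrec n
      push_cast at e1 e2
      ext i k
      fin_cases i <;> fin_cases k <;>
        simp <;> linarith [e1, e2]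
  have hp0 : (p:ℝ) ≠ 0 := ne_of_gt hppos
  have hUp : U ^ p = !![(-1 : ℝ), 0; 0, -1] := by
    obtain ⟨m, hm⟩ : ∃ m, p = m + 1 := ⟨p - 1, by omega⟩
    have hmp : ((m : ℝ) + 1) = (p : ℝ) := by
      rw [hm]; push_cast; ring
    have hpx : (p : ℝ) * x = Real.pi := by
      rw [hxdef]; field_simp
    have htm1 : t (m + 1) = 0 := by
      simp only [ht]
      push_cast
      rw [hmp, hpx, Real.sin_pi, zero_div]
    have htm2 : t (m + 2) = -1 := by
      simp only [ht]
      push_cast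
      rw [show ((m : ℝ) + 2) * x = ((m:ℝ) + 1) * x + x from by ring, hmp, hpx,
        Real.sin_add, Real.sin_pi, Real.cos_pi]
      field_simp
      ring
    have htm : t m = 1 := by
      simp only [ht]
      rw [show (m : ℝ) * x = ((m:ℝ) + 1) * x - x from by ring, hmp, hpx,
        Real.sin_sub, Real.sin_pi, Real.cos_pi, div_eq_one_iff_eq hs]
      ring
    rw [hm, hUpow m, htm1, htm2, htm]
    norm_num
  have hUp1 : U ^ (p + 1) = !![-lam, 1; -1, 0] := by
    rw [pow_succ, hUp, hU, Matrix.mul_fin_two]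
    norm_num
  -- auxiliary facts
  have hUdet : U.det = 1 := by
    rw [hU, Matrix.det_fin_two_of]; ring
  have hdetj : ∀ j : ℕ, (U ^ j) 0 0 * (U ^ j) 1 1 - (U ^ j) 0 1 * (U ^ j) 1 0 = 1 := by
    intro j
    have h := Matrix.det_pow U j
    rw [hUdet, one_pow] at h
    rw [← Matrix.det_fin_two]
    exact h
  have hAlam : A - lam ≠ 0 := by
    intro h
    have : A = lam := by linarith
    rw [this] at hA2
    linarith
  have hU2 : U ^ 2 = !![lam ^ 2 - 1, -lam; lam, -1] := by
    rw [pow_two, hU, Matrix.mul_fin_two]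
    ext i k
    fin_cases i <;> fin_cases k <;> simp <;> ring
  have hU0 : U ^ 0 = !![(1:ℝ), 0; 0, 1] := by
    rw [pow_zero]
    ext i k
    fin_cases i <;> fin_cases k <;> simp [Matrix.one_apply]
  have hU1 : U ^ 1 = !![lam, -1; 1, 0] := by rw [pow_one, hU]
  -- the pole functions
  set G : ℕ → ℂ := fun j =>
    (((U ^ j) 0 0 - A * (U ^ j) 1 0 : ℝ) : ℂ) /
      ((((U ^ j) 0 0 - A * (U ^ j) 1 0 : ℝ) : ℂ) * z +
        (((U ^ j) 0 1 - A * (U ^ j) 1 1 : ℝ) : ℂ)) with hG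
  have hE2 : ∀ j : ℕ, (U ^ (j + 2)) 0 0 - A * (U ^ (j + 2)) 1 0 =
      (A - lam) * (A * (U ^ j) 0 0 + (U ^ j) 1 0) := by
    intro j
    have hpow2 : U ^ (j + 2) = U ^ 2 * U ^ j := by
      rw [show j + 2 = 2 + j from by omega, pow_add]
    simp only [hpow2, hU2, Matrix.mul_apply, Fin.sum_univ_two]
    simp
    linear_combination (-(U ^ j) 0 0) * hA2
  have hF2 : ∀ j : ℕ, (U ^ (j + 2)) 0 1 - A * (U ^ (j + 2)) 1 1 =
      (A - lam) * (A * (U ^ j) 0 1 + (U ^ j) 1 1) := by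
    intro j
    have hpow2 : U ^ (j + 2) = U ^ 2 * U ^ j := by
      rw [show j + 2 = 2 + j from by omega, pow_add]
    simp only [hpow2, hU2, Matrix.mul_apply, Fin.sum_univ_two]
    simp
    linear_combination (-(U ^ j) 0 1) * hA2
  -- the key per-term identity
  have hkey : ∀ j : ℕ, slash 1 (U ^ j) q z = G j - G (j + 2) := by
    intro j
    simp only [slash]
    rw [hq]
    rw [show (-(2 * ((1:ℕ) : ℤ))) = (-2 : ℤ) from by norm_num]
    rw [slash_term_s11 A ((U ^ j) 0 0) ((U ^ j) 0 1) ((U ^ j) 1 0) ((U ^ j) 1 1)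
      (hdetj j) z hz]
    have hg2 : G (j + 2) = ((A * (U ^ j) 0 0 + (U ^ j) 1 0 : ℝ) : ℂ) /
        (((A * (U ^ j) 0 0 + (U ^ j) 1 0 : ℝ) : ℂ) * z +
          ((A * (U ^ j) 0 1 + (U ^ j) 1 1 : ℝ) : ℂ)) := by
      simp only [hG]
      rw [hE2 j, hF2 j]
      exact cancelG (A - lam) _ _ hAlam z
    rw [hg2]
  -- telescoping endpoints
  have hGp : G p = G 0 := by
    simp only [hG]
    rw [hUp, hU0]
    rw [show ((!![(-1:ℝ), 0; 0, -1]) 0 0 - A * (!![(-1:ℝ), 0; 0, -1]) 1 0 : ℝ) =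
        -((!![(1:ℝ), 0; 0, 1]) 0 0 - A * (!![(1:ℝ), 0; 0, 1]) 1 0) from by
          simp,
      show ((!![(-1:ℝ), 0; 0, -1]) 0 1 - A * (!![(-1:ℝ), 0; 0, -1]) 1 1 : ℝ) =
        -((!![(1:ℝ), 0; 0, 1]) 0 1 - A * (!![(1:ℝ), 0; 0, 1]) 1 1) from by
          simp]
    exact negG _ _ z
  have hGp1 : G (p + 1) = G 1 := by
    simp only [hG]
    rw [hUp1, hU1]
    rw [show ((!![-lam, 1; -1, 0]) 0 0 - A * (!![-lam, 1; -1, 0]) 1 0 : ℝ) =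
        -((!![lam, -1; 1, 0]) 0 0 - A * (!![lam, -1; 1, 0]) 1 0) from by
          simp; ring,
      show ((!![-lam, 1; -1, 0]) 0 1 - A * (!![-lam, 1; -1, 0]) 1 1 : ℝ) =
        -((!![lam, -1; 1, 0]) 0 1 - A * (!![lam, -1; 1, 0]) 1 1) from by
          simp]
    exact negG _ _ z
  calc ∑ j ∈ Finset.range p, slash 1 (U ^ j) q z
      = ∑ j ∈ Finset.range p, (G j - G (j + 2)) :=
        Finset.sum_congr rfl (fun j _ => hkey j)
    _ = ∑ j ∈ Finset.range p, ((G j - G (j + 1)) + (G (j + 1) - G (j + 2))) := by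
        apply Finset.sum_congr rfl
        intro j _
        ring
    _ = (G 0 - G p) + (G 1 - G (p + 1)) := by
        rw [Finset.sum_add_distrib, Finset.sum_range_sub' G p,
          Finset.sum_range_sub' (fun j => G (j + 1)) p]
    _ = 0 := by
        rw [hGp, hGp1]
        ring
end

section
/- Fix an integer p ≥ 5, set λ = 2cos(π/p) (so λ² - 1 > 0), and let k be any positive integer. Define q(z) = (z² - (λ²-1))^{-k} - (-1)^k·((λ²-1)·z² - 1)^{-k}. Then q satisfies the rational period function relations of weight 2k on the Hecke group G_p: for every z ∈ ℂ with Im z ≠ 0, q(z) + z^{-2k}·q(-1/z) = 0 and Σ_{j=0}^{p-1} (q |_{2k} U^j)(z) = 0. (Its poles ±√(λ²-1) and ±1/√(λ²-1) form the Hecke-symmetric union of two Hecke-conjugate irreducible systems of poles.) -/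
lemma auxneg (x : ℂ) (k : ℕ) : (-x) ^ (-(k:ℤ)) = (-1)^k * x ^ (-(k:ℤ)) := by
  rw [zpow_neg, zpow_neg, zpow_natCast, zpow_natCast, neg_pow, mul_inv]
  congr 1
  rw [← inv_pow, inv_neg, inv_one]

lemma auxdiv (z x : ℂ) (hz : z ≠ 0) (k : ℕ) :
    z ^ (-(2*(k:ℤ))) * (x / z^2) ^ (-(k:ℤ)) = x ^ (-(k:ℤ)) := by
  have h2 : z ^ (2*(k:ℤ)) ≠ 0 := zpow_ne_zero _ hz
  rw [div_zpow, zpow_neg z, div_eq_mul_inv, zpow_neg (z^2), inv_inv,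
      ← zpow_natCast z 2, ← zpow_mul]
  push_cast
  rw [mul_comm (x ^ _) _, ← mul_assoc, inv_mul_cancel₀ h2, one_mul]

lemma slash_q (k : ℕ) (a : ℂ) (q : ℂ → ℂ)
    (hq : ∀ z : ℂ, q z = (z^2 - a)^(-(k:ℤ)) - (-1)^k * (a * z^2 - 1)^(-(k:ℤ)))
    (M : Matrix (Fin 2) (Fin 2) ℝ) (hdet : M.det = 1)
    (z : ℂ) (hz : z.im ≠ 0) :
    slash k M q z =
      (((M 0 0 : ℂ)*z + (M 0 1 : ℂ))^2 - a*((M 1 0 : ℂ)*z + (M 1 1 : ℂ))^2) ^ (-(k:ℤ)) -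
      (-1)^k * (a*((M 0 0 : ℂ)*z + (M 0 1 : ℂ))^2 - ((M 1 0 : ℂ)*z + (M 1 1 : ℂ))^2) ^ (-(k:ℤ)) := by
  set N : ℂ := (M 0 0 : ℂ)*z + (M 0 1 : ℂ) with hN
  set D : ℂ := (M 1 0 : ℂ)*z + (M 1 1 : ℂ) with hD
  have hDne : D ≠ 0 := denom_ne_zero M hdet z hz
  have e1 : (N/D)^2 - a = (N^2 - a*D^2)/D^2 := by
    field_simp
  have e2 : a*(N/D)^2 - 1 = (a*N^2 - D^2)/D^2 := by
    field_simp
  rw [slash, ← hN, ← hD, hq (N/D), e1, e2, mul_sub, mul_left_comm,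
      auxdiv D _ hDne, auxdiv D _ hDne]

lemma Upow_p (p : ℕ) (hp : 5 ≤ p) (lam : ℝ) (hlam : lam = 2 * Real.cos (Real.pi / p))
    (U : Matrix (Fin 2) (Fin 2) ℝ) (hU : U = !![lam, -1; 1, 0]) :
    U ^ p = -1 := by
  have hppos : (0:ℝ) < p := by positivity
  set θ : ℝ := Real.pi / p with hθ
  set s : ℤ → ℝ := fun j => Real.sin (j * θ) with hs
  have hrec : ∀ j : ℤ, lam * s (j+1) = s (j+2) + s j := by
    intro j
    have h1 : ((j:ℝ)+2)*θ = ((j:ℝ)+1)*θ + θ := by ring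
    have h2 : (j:ℝ)*θ = ((j:ℝ)+1)*θ - θ := by ring
    simp only [hs, hlam]
    push_cast
    rw [h1, h2, Real.sin_add, Real.sin_sub]
    ring
  have key : ∀ n : ℕ, (s 1) • U ^ n = !![s ((n:ℤ)+1), -(s n); s n, -(s ((n:ℤ)-1))] := by
    intro n
    induction n with
    | zero =>
      have h0 : s 0 = 0 := by simp [hs]
      have hm1 : s (-1) = -(s 1) := by
        simp only [hs]
        push_cast
        rw [neg_one_mul, Real.sin_neg, one_mul]
      ext i j
      fin_cases i <;> fin_cases j <;>
        simp [Matrix.one_apply, h0, hm1]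
    | succ n ih =>
      have hstep : U ^ (n+1) = U ^ n * U := pow_succ U n
      rw [hstep, ← smul_mul_assoc, ih, hU]
      have hr1 : lam * s ((n:ℤ)+1) = s ((n:ℤ)+1+1) + s (n:ℤ) := by
        rw [show ((n:ℤ)+1+1) = (n:ℤ)+2 by ring]; exact hrec n
      have hr2 : lam * s (n:ℤ) = s ((n:ℤ)+1) + s ((n:ℤ)-1) := by
        have h := hrec ((n:ℤ)-1)
        rw [show ((n:ℤ)-1+1) = (n:ℤ) by ring, show ((n:ℤ)-1+2) = (n:ℤ)+1 by ring] at h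
        exact h
      ext i j
      fin_cases i <;> fin_cases j <;>
        simp [Matrix.mul_apply, Fin.sum_univ_two] <;> push_cast <;> linarith [hr1, hr2]
  have hkeyp := key p
  have hsp : s p = 0 := by
    have : (p:ℝ) * θ = Real.pi := by
      rw [hθ]; field_simp
    simp [hs, this]
  have hsp1 : s ((p:ℤ)+1) = -(s 1) := by
    have : ((p:ℝ)+1) * θ = Real.pi + θ := by
      rw [hθ]; field_simp
    simp only [hs]
    push_cast
    rw [this, Real.sin_add, Real.sin_pi, Real.cos_pi]
    simp
  have hspm1 : s ((p:ℤ)-1) = s 1 := by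
    have : ((p:ℝ)-1) * θ = Real.pi - θ := by
      rw [hθ]; field_simp
    simp only [hs]
    push_cast
    rw [this, Real.sin_pi_sub, one_mul]
  have hs1pos : 0 < s 1 := by
    simp only [hs]
    push_cast
    rw [one_mul]
    apply Real.sin_pos_of_pos_of_lt_pi
    · positivity
    · rw [hθ]
      calc Real.pi / p < Real.pi / 1 := by
            apply div_lt_div_of_pos_left Real.pi_pos one_pos
            exact_mod_cast by omega
        _ = Real.pi := by ring
  have heq : (s 1) • U ^ p = (s 1) • (-1 : Matrix (Fin 2) (Fin 2) ℝ) := by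
    rw [hkeyp, hsp, hsp1, hspm1]
    ext i j
    fin_cases i <;> fin_cases j <;> simp [Matrix.one_apply]
  exact smul_right_injective _ (ne_of_gt hs1pos) heq

/-- The quadratic form `(az+b)² - α(cz+d)²` attached to a matrix. -/
noncomputable def Bfun (a z : ℂ) (M : Matrix (Fin 2) (Fin 2) ℝ) : ℂ :=
  ((M 0 0 : ℂ)*z + (M 0 1 : ℂ))^2 - a*((M 1 0 : ℂ)*z + (M 1 1 : ℂ))^2

lemma B_neg (a z : ℂ) (M : Matrix (Fin 2) (Fin 2) ℝ) : Bfun a z (-M) = Bfun a z M := by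
  simp only [Bfun, Matrix.neg_apply, Complex.ofReal_neg]
  ring

lemma B_V_mul (lam : ℝ) (z : ℂ) (X : Matrix (Fin 2) (Fin 2) ℝ) :
    Bfun ((lam:ℂ)^2-1) z (!![lam, -(lam^2-1); -1, lam] * X) = Bfun ((lam:ℂ)^2-1) z X := by
  simp only [Bfun, Matrix.mul_apply, Fin.sum_univ_two]
  simp
  push_cast
  ring

lemma B_T_mul (a z : ℂ) (M : Matrix (Fin 2) (Fin 2) ℝ) :
    Bfun a z (!![(0:ℝ), -1; 1, 0] * M) =
      ((M 1 0 : ℂ)*z + (M 1 1 : ℂ))^2 - a*((M 0 0 : ℂ)*z + (M 0 1 : ℂ))^2 := by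
  simp only [Bfun, Matrix.mul_apply, Fin.sum_univ_two]
  simp
  push_cast
  ring

lemma TVU (lam : ℝ) (U : Matrix (Fin 2) (Fin 2) ℝ) (hU : U = !![lam, -1; 1, 0]) :
    !![(0:ℝ), -1; 1, 0] = !![lam, -(lam^2-1); -1, lam] * U ^ 2 := by
  rw [hU, pow_two (!![lam, -1; 1, 0] : Matrix (Fin 2) (Fin 2) ℝ)]
  ext i j
  fin_cases i <;> fin_cases j <;>
    simp [Matrix.mul_apply, Fin.sum_univ_two] <;> ring

/-- Fix an integer `p ≥ 5`, set `λ = 2cos(π/p)` (so `λ² - 1 > 0`),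
and let `k` be any positive integer.  Define
`q(z) = (z² - (λ²-1))^{-k} - (-1)^k·((λ²-1)·z² - 1)^{-k}`.
Then `q` satisfies the rational period function relations of weight `2k` on the
Hecke group `G_p`: for every `z ∈ ℂ` with `Im z ≠ 0`,
`q(z) + z^{-2k}·q(-1/z) = 0` and `Σ_{j=0}^{p-1} (q ∣_{2k} U^j)(z) = 0`. -/
theorem stmt13 (p : ℕ) (hp : 5 ≤ p)
    (lam : ℝ) (hlam : lam = 2 * Real.cos (Real.pi / p))
    (hlam1 : lam ^ 2 - 1 > 0)
    (U : Matrix (Fin 2) (Fin 2) ℝ) (hU : U = !![lam, -1; 1, 0])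
    (k : ℕ) (hk : 0 < k)
    (q : ℂ → ℂ)
    (hq : ∀ z : ℂ, q z =
      (z ^ 2 - ((lam : ℂ) ^ 2 - 1)) ^ (-(k : ℤ)) -
      (-1) ^ k * (((lam : ℂ) ^ 2 - 1) * z ^ 2 - 1) ^ (-(k : ℤ))) :
    ∀ z : ℂ, z.im ≠ 0 →
      q z + z ^ (-(2 * (k : ℤ))) * q (-1 / z) = 0 ∧
      ∑ j ∈ Finset.range p, slash k (U ^ j) q z = 0 := by
  intro z hz
  set a : ℂ := (lam : ℂ)^2 - 1 with ha
  have hsq : ((-1:ℂ))^k * ((-1:ℂ))^k = 1 := by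
    rw [← pow_add]
    exact Even.neg_one_pow ⟨k, rfl⟩
  have hz0 : z ≠ 0 := by
    intro h
    rw [h] at hz
    simp at hz
  constructor
  · -- first relation
    rw [hq z, hq (-1/z)]
    have c1 : (-1/z)^2 - a = (1 - a*z^2)/z^2 := by
      field_simp
    have c2 : a*(-1/z)^2 - 1 = (a - z^2)/z^2 := by
      field_simp
    rw [c1, c2, mul_sub, mul_left_comm, auxdiv z _ hz0 k, auxdiv z _ hz0 k,
        show (1 - a*z^2) = -(a*z^2 - 1) by ring, show (a - z^2) = -(z^2 - a) by ring,
        auxneg, auxneg]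
    linear_combination (-((z^2 - a)^(-(k:ℤ)))) * hsq
  · -- second relation
    have hdetU : U.det = 1 := by
      rw [hU, Matrix.det_fin_two_of]
      ring
    have hdetUj : ∀ j : ℕ, (U ^ j).det = 1 := by
      intro j
      rw [Matrix.det_pow, hdetU, one_pow]
    have hstep : ∀ j : ℕ, slash k (U ^ j) q z =
        (Bfun a z (U ^ j)) ^ (-(k:ℤ)) - (Bfun a z (U ^ (j+2))) ^ (-(k:ℤ)) := by
      intro j
      have h1 : a*(((U^j) 0 0 : ℂ)*z + ((U^j) 0 1 : ℂ))^2 - (((U^j) 1 0 : ℂ)*z + ((U^j) 1 1 : ℂ))^2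
          = -(Bfun a z (!![(0:ℝ), -1; 1, 0] * U ^ j)) := by
        rw [B_T_mul]
        ring
      have h2 : !![(0:ℝ), -1; 1, 0] * U ^ j = !![lam, -(lam^2-1); -1, lam] * U ^ (j+2) := by
        rw [TVU lam U hU, mul_assoc]
        congr 1
        rw [← pow_add, Nat.add_comm]
      rw [slash_q k a q hq (U ^ j) (hdetUj j) z hz, h1, auxneg, ← mul_assoc, hsq, one_mul,
          h2, ha, B_V_mul]
      simp only [Bfun]
    have hUp : U ^ p = -1 := Upow_p p hp lam hlam U hU
    calc ∑ j ∈ Finset.range p, slash k (U ^ j) q z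
        = ∑ j ∈ Finset.range p,
            (((Bfun a z (U ^ j)) ^ (-(k:ℤ)) - (Bfun a z (U ^ (j+1))) ^ (-(k:ℤ))) +
             ((Bfun a z (U ^ (j+1))) ^ (-(k:ℤ)) - (Bfun a z (U ^ (j+2))) ^ (-(k:ℤ)))) := by
          apply Finset.sum_congr rfl
          intro j _
          rw [hstep j]
          ring
      _ = ((Bfun a z (U ^ 0)) ^ (-(k:ℤ)) - (Bfun a z (U ^ p)) ^ (-(k:ℤ))) +
          ((Bfun a z (U ^ (0+1))) ^ (-(k:ℤ)) - (Bfun a z (U ^ (p+1))) ^ (-(k:ℤ))) := by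
          rw [Finset.sum_add_distrib,
              Finset.sum_range_sub' (fun j => (Bfun a z (U ^ j)) ^ (-(k:ℤ))) p,
              Finset.sum_range_sub' (fun j => (Bfun a z (U ^ (j+1))) ^ (-(k:ℤ))) p]
      _ = 0 := by
          have e1 : Bfun a z (U ^ p) = Bfun a z (U ^ 0) := by
            rw [hUp, pow_zero, show (-1 : Matrix (Fin 2) (Fin 2) ℝ) = -(1) from rfl, B_neg]
          have e2 : Bfun a z (U ^ (p+1)) = Bfun a z (U ^ (0+1)) := by
            rw [pow_succ, hUp, neg_one_mul, B_neg, zero_add, pow_one]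
          rw [e1, e2]
          ring
end

section
/- Let p = 3 and λ = 2cos(π/3) = 1, so U = ((1,-1),(1,0)). Set α₁ = (1+√5)/2, α₁′ = (1-√5)/2, α₂ = (-1+√5)/2, α₂′ = (-1-√5)/2, and define q(z) = (-2/√5)/(z-α₁) + 1/(z-α₁)² - (2/√5)/(z-α₁′) - 1/(z-α₁′)² + (-2/√5)/(z-α₂) + 1/(z-α₂)² - (2/√5)/(z-α₂′) - 1/(z-α₂′)² + (8/√5)/z. Then q satisfies the rational period function relations of weight 4 on the modular group G_3: for every z ∈ ℂ with Im z ≠ 0, q(z) + z^{-4}·q(-1/z) = 0 and q(z) + (q |_{4} U)(z) + (q |_{4} U²)(z) = 0. -/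
lemma sub_real_ne (w : ℂ) (hw : w.im ≠ 0) (r : ℝ) : w - (r : ℂ) ≠ 0 := by
  intro h
  apply hw
  have : w = (r : ℂ) := by linear_combination h
  rw [this]; simp

lemma ne_zero_of_im (w : ℂ) (hw : w.im ≠ 0) : w ≠ 0 := by
  simpa using sub_real_ne w hw 0

lemma im_neg_inv (z : ℂ) (hz : z.im ≠ 0) : (-1 / z).im ≠ 0 := by
  rw [neg_div, Complex.neg_im, one_div, Complex.inv_im]
  have hn : Complex.normSq z ≠ 0 := ne_of_gt (Complex.normSq_pos.mpr (ne_zero_of_im z hz))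
  intro h
  apply hz
  field_simp at h
  simpa using h

lemma im_frac (z : ℂ) (hz : z.im ≠ 0) : ((z - 1) / z).im ≠ 0 := by
  have h0 := ne_zero_of_im z hz
  have : (z - 1) / z = 1 + (-1 / z) := by field_simp; ring
  rw [this, Complex.add_im, Complex.one_im, zero_add]
  exact im_neg_inv z hz

lemma hcsq : (Real.sqrt 5 : ℂ) ^ 2 = 5 := by
  rw [← Complex.ofReal_pow, Real.sq_sqrt (by norm_num : (5:ℝ) ≥ 0)]
  norm_num

lemma hc0 : (Real.sqrt 5 : ℂ) ≠ 0 := by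
  simpa using Real.sqrt_ne_zero'.mpr (by norm_num : (0:ℝ) < 5)

lemma quadA (w : ℂ) (hw : w.im ≠ 0) : w ^ 2 - w - 1 ≠ 0 := by
  have hf : w ^ 2 - w - 1 = (w - (((1 + Real.sqrt 5)/2 : ℝ) : ℂ)) * (w - (((1 - Real.sqrt 5)/2 : ℝ) : ℂ)) := by
    push_cast
    linear_combination (1/4 : ℂ) * hcsq
  rw [hf]
  exact mul_ne_zero (sub_real_ne w hw _) (sub_real_ne w hw _)

lemma quadB (w : ℂ) (hw : w.im ≠ 0) : w ^ 2 + w - 1 ≠ 0 := by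
  have hf : w ^ 2 + w - 1 = (w - (((-1 + Real.sqrt 5)/2 : ℝ) : ℂ)) * (w - (((-1 - Real.sqrt 5)/2 : ℝ) : ℂ)) := by
    push_cast
    linear_combination (1/4 : ℂ) * hcsq
  rw [hf]
  exact mul_ne_zero (sub_real_ne w hw _) (sub_real_ne w hw _)

lemma quadC (w : ℂ) (hw : w.im ≠ 0) : w ^ 2 - 3 * w + 1 ≠ 0 := by
  have hf : w ^ 2 - 3 * w + 1 = (w - (((3 + Real.sqrt 5)/2 : ℝ) : ℂ)) * (w - (((3 - Real.sqrt 5)/2 : ℝ) : ℂ)) := by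
    push_cast
    linear_combination (1/4 : ℂ) * hcsq
  rw [hf]
  exact mul_ne_zero (sub_real_ne w hw _) (sub_real_ne w hw _)

/-- the √5-free single-fraction form of q -/
noncomputable def Rfun (w : ℂ) : ℂ :=
  (8*w^6 + 4*w^4 + 4*w^2 + 8) / (w * (w^2 - w - 1)^2 * (w^2 + w - 1)^2)

lemma zpow_neg4 (z : ℂ) : z ^ (-4 : ℤ) = 1 / z ^ 4 := by
  rw [show ((-4:ℤ)) = -((4:ℕ):ℤ) by norm_num, zpow_neg, zpow_natCast, one_div]

set_option maxHeartbeats 1000000 in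
lemma qform (w : ℂ) (hw : w.im ≠ 0) :
    (-2 / (Real.sqrt 5 : ℂ)) / (w - ((((1 + Real.sqrt 5) / 2 : ℝ)) : ℂ)) + 1 / (w - ((((1 + Real.sqrt 5) / 2 : ℝ)) : ℂ)) ^ 2 -
      (2 / (Real.sqrt 5 : ℂ)) / (w - ((((1 - Real.sqrt 5) / 2 : ℝ)) : ℂ)) - 1 / (w - ((((1 - Real.sqrt 5) / 2 : ℝ)) : ℂ)) ^ 2 +
      (-2 / (Real.sqrt 5 : ℂ)) / (w - ((((-1 + Real.sqrt 5) / 2 : ℝ)) : ℂ)) + 1 / (w - ((((-1 + Real.sqrt 5) / 2 : ℝ)) : ℂ)) ^ 2 -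
      (2 / (Real.sqrt 5 : ℂ)) / (w - ((((-1 - Real.sqrt 5) / 2 : ℝ)) : ℂ)) - 1 / (w - ((((-1 - Real.sqrt 5) / 2 : ℝ)) : ℂ)) ^ 2 +
      (8 / (Real.sqrt 5 : ℂ)) / w
    = Rfun w / (Real.sqrt 5 : ℂ) := by
  set c : ℂ := (Real.sqrt 5 : ℂ) with hcdef
  have hx1 := sub_real_ne w hw ((1 + Real.sqrt 5) / 2)
  have hy1 := sub_real_ne w hw ((1 - Real.sqrt 5) / 2)
  have hx2 := sub_real_ne w hw ((-1 + Real.sqrt 5) / 2)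
  have hy2 := sub_real_ne w hw ((-1 - Real.sqrt 5) / 2)
  have hw0 := ne_zero_of_im w hw
  have hA := quadA w hw
  have hB := quadB w hw
  have hc := hc0
  have hcA2 : c * (w^2 - w - 1)^2 ≠ 0 := mul_ne_zero hc (pow_ne_zero 2 hA)
  have hcB2 : c * (w^2 + w - 1)^2 ≠ 0 := mul_ne_zero hc (pow_ne_zero 2 hB)
  -- pair 1
  have pA1 : (-2/c) / (w - ((((1 + Real.sqrt 5) / 2 : ℝ)) : ℂ)) - (2/c) / (w - ((((1 - Real.sqrt 5) / 2 : ℝ)) : ℂ))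
      = (-2/c) * (2*w - 1) / (w^2 - w - 1) := by
    rw [div_sub_div _ _ hx1 hy1,
      show (w - ((((1 + Real.sqrt 5) / 2 : ℝ)) : ℂ)) * (w - ((((1 - Real.sqrt 5) / 2 : ℝ)) : ℂ)) = w^2 - w - 1 by
        push_cast; linear_combination (-1/4 : ℂ) * hcsq,
      show (-2/c) * (w - ((((1 - Real.sqrt 5) / 2 : ℝ)) : ℂ)) - (w - ((((1 + Real.sqrt 5) / 2 : ℝ)) : ℂ)) * (2/c) = (-2/c) * (2*w - 1) by
        push_cast; ring]
  have pB1 : 1 / (w - ((((1 + Real.sqrt 5) / 2 : ℝ)) : ℂ))^2 - 1 / (w - ((((1 - Real.sqrt 5) / 2 : ℝ)) : ℂ))^2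
      = c * (2*w - 1) / (w^2 - w - 1)^2 := by
    rw [div_sub_div _ _ (pow_ne_zero 2 hx1) (pow_ne_zero 2 hy1),
      show (w - ((((1 + Real.sqrt 5) / 2 : ℝ)) : ℂ))^2 * (w - ((((1 - Real.sqrt 5) / 2 : ℝ)) : ℂ))^2 = ((w - ((((1 + Real.sqrt 5) / 2 : ℝ)) : ℂ)) * (w - ((((1 - Real.sqrt 5) / 2 : ℝ)) : ℂ)))^2 by ring,
      show (w - ((((1 + Real.sqrt 5) / 2 : ℝ)) : ℂ)) * (w - ((((1 - Real.sqrt 5) / 2 : ℝ)) : ℂ)) = w^2 - w - 1 by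
        push_cast; linear_combination (-1/4 : ℂ) * hcsq,
      show 1 * (w - ((((1 - Real.sqrt 5) / 2 : ℝ)) : ℂ))^2 - (w - ((((1 + Real.sqrt 5) / 2 : ℝ)) : ℂ))^2 * 1 = c * (2*w - 1) by
        rw [hcdef]; push_cast; ring]
  have comb1 : (-2/c) * (2*w - 1) / (w^2 - w - 1) + c * (2*w - 1) / (w^2 - w - 1)^2
      = (5*(2*w - 1) - 2*(2*w - 1)*(w^2 - w - 1)) / (c * (w^2 - w - 1)^2) := by
    rw [show (-2/c) * (2*w - 1) / (w^2 - w - 1) = (-2*(2*w-1)) / (c * (w^2 - w - 1)) by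
        rw [div_mul_eq_mul_div, div_div],
      div_add_div _ _ (mul_ne_zero hc hA) (pow_ne_zero 2 hA),
      div_eq_div_iff (mul_ne_zero (mul_ne_zero hc hA) (pow_ne_zero 2 hA)) hcA2]
    linear_combination (c * (w^2 - w - 1)^3 * (2*w - 1)) * hcsq
  have e1 : (-2/c) / (w - ((((1 + Real.sqrt 5) / 2 : ℝ)) : ℂ)) + 1 / (w - ((((1 + Real.sqrt 5) / 2 : ℝ)) : ℂ))^2 -
      (2/c) / (w - ((((1 - Real.sqrt 5) / 2 : ℝ)) : ℂ)) - 1 / (w - ((((1 - Real.sqrt 5) / 2 : ℝ)) : ℂ))^2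
      = (5*(2*w - 1) - 2*(2*w - 1)*(w^2 - w - 1)) / (c * (w^2 - w - 1)^2) := by
    linear_combination pA1 + pB1 + comb1
  -- pair 2
  have pA2 : (-2/c) / (w - ((((-1 + Real.sqrt 5) / 2 : ℝ)) : ℂ)) - (2/c) / (w - ((((-1 - Real.sqrt 5) / 2 : ℝ)) : ℂ))
      = (-2/c) * (2*w + 1) / (w^2 + w - 1) := by
    rw [div_sub_div _ _ hx2 hy2,
      show (w - ((((-1 + Real.sqrt 5) / 2 : ℝ)) : ℂ)) * (w - ((((-1 - Real.sqrt 5) / 2 : ℝ)) : ℂ)) = w^2 + w - 1 by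
        push_cast; linear_combination (-1/4 : ℂ) * hcsq,
      show (-2/c) * (w - ((((-1 - Real.sqrt 5) / 2 : ℝ)) : ℂ)) - (w - ((((-1 + Real.sqrt 5) / 2 : ℝ)) : ℂ)) * (2/c) = (-2/c) * (2*w + 1) by
        push_cast; ring]
  have pB2 : 1 / (w - ((((-1 + Real.sqrt 5) / 2 : ℝ)) : ℂ))^2 - 1 / (w - ((((-1 - Real.sqrt 5) / 2 : ℝ)) : ℂ))^2
      = c * (2*w + 1) / (w^2 + w - 1)^2 := by
    rw [div_sub_div _ _ (pow_ne_zero 2 hx2) (pow_ne_zero 2 hy2),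
      show (w - ((((-1 + Real.sqrt 5) / 2 : ℝ)) : ℂ))^2 * (w - ((((-1 - Real.sqrt 5) / 2 : ℝ)) : ℂ))^2 = ((w - ((((-1 + Real.sqrt 5) / 2 : ℝ)) : ℂ)) * (w - ((((-1 - Real.sqrt 5) / 2 : ℝ)) : ℂ)))^2 by ring,
      show (w - ((((-1 + Real.sqrt 5) / 2 : ℝ)) : ℂ)) * (w - ((((-1 - Real.sqrt 5) / 2 : ℝ)) : ℂ)) = w^2 + w - 1 by
        push_cast; linear_combination (-1/4 : ℂ) * hcsq,
      show 1 * (w - ((((-1 - Real.sqrt 5) / 2 : ℝ)) : ℂ))^2 - (w - ((((-1 + Real.sqrt 5) / 2 : ℝ)) : ℂ))^2 * 1 = c * (2*w + 1) by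
        rw [hcdef]; push_cast; ring]
  have comb2 : (-2/c) * (2*w + 1) / (w^2 + w - 1) + c * (2*w + 1) / (w^2 + w - 1)^2
      = (5*(2*w + 1) - 2*(2*w + 1)*(w^2 + w - 1)) / (c * (w^2 + w - 1)^2) := by
    rw [show (-2/c) * (2*w + 1) / (w^2 + w - 1) = (-2*(2*w+1)) / (c * (w^2 + w - 1)) by
        rw [div_mul_eq_mul_div, div_div],
      div_add_div _ _ (mul_ne_zero hc hB) (pow_ne_zero 2 hB),
      div_eq_div_iff (mul_ne_zero (mul_ne_zero hc hB) (pow_ne_zero 2 hB)) hcB2]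
    linear_combination (c * (w^2 + w - 1)^3 * (2*w + 1)) * hcsq
  have e2 : (-2/c) / (w - ((((-1 + Real.sqrt 5) / 2 : ℝ)) : ℂ)) + 1 / (w - ((((-1 + Real.sqrt 5) / 2 : ℝ)) : ℂ))^2 -
      (2/c) / (w - ((((-1 - Real.sqrt 5) / 2 : ℝ)) : ℂ)) - 1 / (w - ((((-1 - Real.sqrt 5) / 2 : ℝ)) : ℂ))^2
      = (5*(2*w + 1) - 2*(2*w + 1)*(w^2 + w - 1)) / (c * (w^2 + w - 1)^2) := by
    linear_combination pA2 + pB2 + comb2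
  -- assemble
  have e3 : (8/c)/w = 8/(c*w) := div_div 8 c w
  rw [Rfun]
  calc (-2/c) / (w - ((((1 + Real.sqrt 5) / 2 : ℝ)) : ℂ)) + 1 / (w - ((((1 + Real.sqrt 5) / 2 : ℝ)) : ℂ)) ^ 2 -
      (2/c) / (w - ((((1 - Real.sqrt 5) / 2 : ℝ)) : ℂ)) - 1 / (w - ((((1 - Real.sqrt 5) / 2 : ℝ)) : ℂ)) ^ 2 +
      (-2/c) / (w - ((((-1 + Real.sqrt 5) / 2 : ℝ)) : ℂ)) + 1 / (w - ((((-1 + Real.sqrt 5) / 2 : ℝ)) : ℂ)) ^ 2 -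
      (2/c) / (w - ((((-1 - Real.sqrt 5) / 2 : ℝ)) : ℂ)) - 1 / (w - ((((-1 - Real.sqrt 5) / 2 : ℝ)) : ℂ)) ^ 2 +
      (8/c) / w
      = ((-2/c) / (w - ((((1 + Real.sqrt 5) / 2 : ℝ)) : ℂ)) + 1 / (w - ((((1 + Real.sqrt 5) / 2 : ℝ)) : ℂ))^2 -
      (2/c) / (w - ((((1 - Real.sqrt 5) / 2 : ℝ)) : ℂ)) - 1 / (w - ((((1 - Real.sqrt 5) / 2 : ℝ)) : ℂ))^2)
      + ((-2/c) / (w - ((((-1 + Real.sqrt 5) / 2 : ℝ)) : ℂ)) + 1 / (w - ((((-1 + Real.sqrt 5) / 2 : ℝ)) : ℂ))^2 -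
      (2/c) / (w - ((((-1 - Real.sqrt 5) / 2 : ℝ)) : ℂ)) - 1 / (w - ((((-1 - Real.sqrt 5) / 2 : ℝ)) : ℂ))^2)
      + (8/c)/w := by ring
    _ = (5*(2*w - 1) - 2*(2*w - 1)*(w^2 - w - 1)) / (c * (w^2 - w - 1)^2)
        + (5*(2*w + 1) - 2*(2*w + 1)*(w^2 + w - 1)) / (c * (w^2 + w - 1)^2)
        + 8/(c*w) := by rw [e1, e2, e3]
    _ = (8*w^6 + 4*w^4 + 4*w^2 + 8) / (w * (w^2 - w - 1)^2 * (w^2 + w - 1)^2) / c := by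
      rw [div_div]
      rw [div_add_div _ _ hcA2 hcB2,
        div_add_div _ _ (mul_ne_zero hcA2 hcB2) (mul_ne_zero hc hw0),
        div_eq_div_iff (mul_ne_zero (mul_ne_zero hcA2 hcB2) (mul_ne_zero hc hw0))
          (mul_ne_zero (mul_ne_zero (mul_ne_zero hw0 (pow_ne_zero 2 hA)) (pow_ne_zero 2 hB)) hc)]
      ring


set_option maxHeartbeats 2000000 in
lemma Rsub1 (z : ℂ) (hz : z ≠ 0) (hA : z^2 - z - 1 ≠ 0) (hB : z^2 + z - 1 ≠ 0) :
    Rfun (-1/z) = (-8*z^9 - 4*z^7 - 4*z^5 - 8*z^3) / ((z^2 - z - 1)^2 * (z^2 + z - 1)^2) := by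
  set u : ℂ := z⁻¹ with hu
  have h : z * u = 1 := mul_inv_cancel₀ hz
  have hw : -1/z = -u := by rw [neg_div, one_div]
  have hu0 : -u ≠ 0 := by
    simp only [neg_ne_zero, hu]
    exact inv_ne_zero hz
  have h1 : (-u)^2 - (-u) - 1 ≠ 0 := by
    intro hh; apply hA
    have key : z^2 * ((-u)^2 - (-u) - 1) = -(z^2 - z - 1) := by
      linear_combination ((1:ℂ) + z + z*u) * h
    rw [hh] at key
    linear_combination key
  have h2 : (-u)^2 + (-u) - 1 ≠ 0 := by
    intro hh; apply hB
    have key : z^2 * ((-u)^2 + (-u) - 1) = -(z^2 + z - 1) := by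
      linear_combination ((1:ℂ) - z + z*u) * h
    rw [hh] at key
    linear_combination key
  rw [Rfun, hw, div_eq_div_iff
    (mul_ne_zero (mul_ne_zero hu0 (pow_ne_zero 2 h1)) (pow_ne_zero 2 h2))
    (mul_ne_zero (pow_ne_zero 2 hA) (pow_ne_zero 2 hB))]
  linear_combination ((-8:ℂ) + (-4:ℂ)*u^2 + (-4:ℂ)*u^4 + (-8:ℂ)*u^6 + (-8:ℂ)*z*u + (-4:ℂ)*z*u^3 + (-4:ℂ)*z*u^5 + (-8:ℂ)*z*u^7 + (48:ℂ)*z^2 + (16:ℂ)*z^2*u^2 + (20:ℂ)*z^2*u^4 + (44:ℂ)*z^2*u^6 + (-8:ℂ)*z^2*u^8 + (56:ℂ)*z^3*u + (-32:ℂ)*z^3*u^3 + (108:ℂ)*z^3*u^5 + (-4:ℂ)*z^3*u^7 + (-88:ℂ)*z^4 + (12:ℂ)*z^4*u^2 + (-76:ℂ)*z^4*u^4 + (20:ℂ)*z^4*u^6 + (-4:ℂ)*z^4*u^8 + (-84:ℂ)*z^5*u + (-12:ℂ)*z^5*u^3 + (-32:ℂ)*z^5*u^5 + (-4:ℂ)*z^5*u^7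 + (48:ℂ)*z^6 + (-60:ℂ)*z^6*u^2 + (12:ℂ)*z^6*u^4 + (16:ℂ)*z^6*u^6 + (-4:ℂ)*z^6*u^8 + (52:ℂ)*z^7*u + (-84:ℂ)*z^7*u^3 + (56:ℂ)*z^7*u^5 + (-8:ℂ)*z^7*u^7 + (-8:ℂ)*z^8 + (48:ℂ)*z^8*u^2 + (-88:ℂ)*z^8*u^4 + (48:ℂ)*z^8*u^6 + (-8:ℂ)*z^8*u^8) * h

set_option maxHeartbeats 2000000 in
lemma Rsub2 (z : ℂ) (hz : z ≠ 0) (hz1 : z - 1 ≠ 0) (hB : z^2 + z - 1 ≠ 0) (hC : z^2 - 3*z + 1 ≠ 0) :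
    Rfun ((z-1)/z) = (24*z^9 - 72*z^8 + 148*z^7 - 176*z^6 + 124*z^5 - 48*z^4 + 8*z^3)
      / ((z - 1) * (z^2 + z - 1)^2 * (z^2 - 3*z + 1)^2) := by
  set u : ℂ := z⁻¹ with hu
  have h : z * u = 1 := mul_inv_cancel₀ hz
  have hw : (z-1)/z = (z-1)*u := by rw [div_eq_iff hz]; linear_combination (-(z-1)) * h
  have hu0 : (z-1)*u ≠ 0 := mul_ne_zero hz1 (by rw [hu]; exact inv_ne_zero hz)
  have h1 : ((z-1)*u)^2 - ((z-1)*u) - 1 ≠ 0 := by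
    intro hh; apply hB
    have key : z^2 * (((z-1)*u)^2 - ((z-1)*u) - 1) = -(z^2 + z - 1) := by
      linear_combination ((1:ℂ) - z + z*u - 2*z^2*u + z^3*u) * h
    rw [hh] at key
    linear_combination key
  have h2 : ((z-1)*u)^2 + ((z-1)*u) - 1 ≠ 0 := by
    intro hh; apply hC
    have key : z^2 * (((z-1)*u)^2 + ((z-1)*u) - 1) = z^2 - 3*z + 1 := by
      linear_combination ((1:ℂ) - 3*z + z*u + 2*z^2 - 2*z^2*u + z^3*u) * h
    rw [hh] at key
    linear_combination -key
  rw [Rfun, hw, div_eq_div_iff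
    (mul_ne_zero (mul_ne_zero hu0 (pow_ne_zero 2 h1)) (pow_ne_zero 2 h2))
    (mul_ne_zero (mul_ne_zero hz1 (pow_ne_zero 2 hB)) (pow_ne_zero 2 hC))]
  linear_combination ((8:ℂ) + (4:ℂ)*u^2 + (4:ℂ)*u^4 + (8:ℂ)*u^6 + (-72:ℂ)*z + (8:ℂ)*z*u + (-44:ℂ)*z*u^2 + (4:ℂ)*z*u^3 + (-52:ℂ)*z*u^4 + (4:ℂ)*z*u^5 + (-120:ℂ)*z*u^6 + (8:ℂ)*z*u^7 + (240:ℂ)*z^2 + (-72:ℂ)*z^2*u + (204:ℂ)*z^2*u^2 + (-44:ℂ)*z^2*u^3 + (292:ℂ)*z^2*u^4 + (-52:ℂ)*z^2*u^5 + (796:ℂ)*z^2*u^6 + (-120:ℂ)*z^2*u^7 + (8:ℂ)*z^2*u^8 + (-336:ℂ)*z^3 + (232:ℂ)*z^3*u + (-516:ℂ)*z^3*u^2 + (252:ℂ)*z^3*u^3 + (-924:ℂ)*z^3*u^4 + (204:ℂ)*z^3*u^5 + (-3068:ℂ)*z^3*u^6 + (844:ℂ)*z^3*u^7 + (-120:ℂ)*z^3*u^8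 + (88:ℂ)*z^4 + (-280:ℂ)*z^4*u + (732:ℂ)*z^4*u^2 + (-948:ℂ)*z^4*u^3 + (1836:ℂ)*z^4*u^4 + (44:ℂ)*z^4*u^5 + (7468:ℂ)*z^4*u^6 + (-3692:ℂ)*z^4*u^7 + (844:ℂ)*z^4*u^8 + (232:ℂ)*z^5 + (-84:ℂ)*z^5*u + (-420:ℂ)*z^5*u^2 + (2484:ℂ)*z^5*u^3 + (-2532:ℂ)*z^5*u^4 + (-3048:ℂ)*z^5*u^5 + (-11220:ℂ)*z^5*u^6 + (11236:ℂ)*z^5*u^7 + (-3692:ℂ)*z^5*u^8 + (-176:ℂ)*z^6 + (532:ℂ)*z^6*u + (-360:ℂ)*z^6*u^2 + (-4620:ℂ)*z^6*u^3 + (2988:ℂ)*z^6*u^4 + (12384:ℂ)*z^6*u^5 + (7464:ℂ)*z^6*u^6 + (-25212:ℂ)*z^6*u^7 + (11236:ℂ)*z^6*u^8 + (-16:ℂ)*z^7 + (-500:ℂ)*z^7*u + (816:ℂ)*z^7*u^2 + (6216:ℂ)*z^7*u^3 + (-3924:ℂ)*z^7*u^4 + (-27680:ℂ)*z^7*u^5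 + (8592:ℂ)*z^7*u^6 + (43128:ℂ)*z^7*u^7 + (-25212:ℂ)*z^7*u^8 + (40:ℂ)*z^8 + (204:ℂ)*z^8*u + (-552:ℂ)*z^8*u^2 + (-6192:ℂ)*z^8*u^3 + (5320:ℂ)*z^8*u^4 + (40736:ℂ)*z^8*u^5 + (-31248:ℂ)*z^8*u^6 + (-57360:ℂ)*z^8*u^7 + (43128:ℂ)*z^8*u^8 + (-8:ℂ)*z^9 + (-56:ℂ)*z^9*u + (152:ℂ)*z^9*u^2 + (4608:ℂ)*z^9*u^3 + (-5856:ℂ)*z^9*u^4 + (-41892:ℂ)*z^9*u^5 + (46384:ℂ)*z^9*u^6 + (59952:ℂ)*z^9*u^7 + (-57360:ℂ)*z^9*u^8 + (16:ℂ)*z^10*u + (-28:ℂ)*z^10*u^2 + (-2464:ℂ)*z^10*u^3 + (4688:ℂ)*z^10*u^4 + (30708:ℂ)*z^10*u^5 + (-44868:ℂ)*z^10*u^6 + (-49424:ℂ)*z^10*u^7 + (59952:ℂ)*z^10*u^8 + (12:ℂ)*z^11*u^2 + (836:ℂ)*z^11*u^3 + (-2576:ℂ)*z^11*u^4 + (-15948:ℂ)*z^11*u^5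 + (30836:ℂ)*z^11*u^6 + (32028:ℂ)*z^11*u^7 + (-49424:ℂ)*z^11*u^8 + (-132:ℂ)*z^12*u^3 + (872:ℂ)*z^12*u^4 + (5652:ℂ)*z^12*u^5 + (-15268:ℂ)*z^12*u^6 + (-16108:ℂ)*z^12*u^7 + (32028:ℂ)*z^12*u^8 + (-136:ℂ)*z^13*u^4 + (-1240:ℂ)*z^13*u^5 + (5276:ℂ)*z^13*u^6 + (6116:ℂ)*z^13*u^7 + (-16108:ℂ)*z^13*u^8 + (128:ℂ)*z^14*u^5 + (-1152:ℂ)*z^14*u^6 + (-1660:ℂ)*z^14*u^7 + (6116:ℂ)*z^14*u^8 + (120:ℂ)*z^15*u^6 + (288:ℂ)*z^15*u^7 + (-1660:ℂ)*z^15*u^8 + (-24:ℂ)*z^16*u^7 + (288:ℂ)*z^16*u^8 + (-24:ℂ)*z^17*u^8) * h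

set_option maxHeartbeats 2000000 in
lemma Rsub3 (z : ℂ) (hz1 : z - 1 ≠ 0) (hA : z^2 - z - 1 ≠ 0) (hC : z^2 - 3*z + 1 ≠ 0) :
    Rfun (-1/(z-1)) = (-8*z^9 + 72*z^8 - 292*z^7 + 700*z^6 - 1096*z^5 + 1168*z^4 - 860*z^3 + 436*z^2 - 144*z + 24)
      / ((z^2 - 3*z + 1)^2 * (z^2 - z - 1)^2) := by
  set u : ℂ := (z-1)⁻¹ with hu
  have h : (z-1) * u = 1 := mul_inv_cancel₀ hz1
  have hw : -1/(z-1) = -u := by rw [neg_div, one_div]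
  have hu0 : -u ≠ 0 := by
    simp only [neg_ne_zero, hu]
    exact inv_ne_zero hz1
  have h1 : (-u)^2 - (-u) - 1 ≠ 0 := by
    intro hh; apply hC
    have key : (z-1)^2 * ((-u)^2 - (-u) - 1) = -(z^2 - 3*z + 1) := by
      linear_combination ((1:ℂ) + (z-1) + (z-1)*u) * h
    rw [hh] at key
    linear_combination key
  have h2 : (-u)^2 + (-u) - 1 ≠ 0 := by
    intro hh; apply hA
    have key : (z-1)^2 * ((-u)^2 + (-u) - 1) = -(z^2 - z - 1) := by
      linear_combination ((1:ℂ) - (z-1) + (z-1)*u) * h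
    rw [hh] at key
    linear_combination key
  rw [Rfun, hw, div_eq_div_iff
    (mul_ne_zero (mul_ne_zero hu0 (pow_ne_zero 2 h1)) (pow_ne_zero 2 h2))
    (mul_ne_zero (pow_ne_zero 2 hC) (pow_ne_zero 2 hA))]
  linear_combination ((-8:ℂ) + (-4:ℂ)*u^2 + (-4:ℂ)*u^4 + (-8:ℂ)*u^6 + (-8:ℂ)*(z-1)*u + (-4:ℂ)*(z-1)*u^3 + (-4:ℂ)*(z-1)*u^5 + (-8:ℂ)*(z-1)*u^7 + (48:ℂ)*(z-1)^2 + (16:ℂ)*(z-1)^2*u^2 + (20:ℂ)*(z-1)^2*u^4 + (44:ℂ)*(z-1)^2*u^6 + (-8:ℂ)*(z-1)^2*u^8 + (56:ℂ)*(z-1)^3*u + (-32:ℂ)*(z-1)^3*u^3 + (108:ℂ)*(z-1)^3*u^5 + (-4:ℂ)*(z-1)^3*u^7 + (-88:ℂ)*(z-1)^4 + (12:ℂ)*(z-1)^4*u^2 + (-76:ℂ)*(z-1)^4*u^4 + (20:ℂ)*(z-1)^4*u^6 + (-4:ℂ)*(z-1)^4*u^8 + (-84:ℂ)*(z-1)^5*u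 + (-12:ℂ)*(z-1)^5*u^3 + (-32:ℂ)*(z-1)^5*u^5 + (-4:ℂ)*(z-1)^5*u^7 + (48:ℂ)*(z-1)^6 + (-60:ℂ)*(z-1)^6*u^2 + (12:ℂ)*(z-1)^6*u^4 + (16:ℂ)*(z-1)^6*u^6 + (-4:ℂ)*(z-1)^6*u^8 + (52:ℂ)*(z-1)^7*u + (-84:ℂ)*(z-1)^7*u^3 + (56:ℂ)*(z-1)^7*u^5 + (-8:ℂ)*(z-1)^7*u^7 + (-8:ℂ)*(z-1)^8 + (48:ℂ)*(z-1)^8*u^2 + (-88:ℂ)*(z-1)^8*u^4 + (48:ℂ)*(z-1)^8*u^6 + (-8:ℂ)*(z-1)^8*u^8) * h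

set_option maxHeartbeats 2000000 in
lemma rel1 (z : ℂ) (hz : z ≠ 0) (hA : z^2 - z - 1 ≠ 0) (hB : z^2 + z - 1 ≠ 0) :
    Rfun z + z^(-4:ℤ) * Rfun (-1/z) = 0 := by
  rw [Rsub1 z hz hA hB, Rfun, zpow_neg4, div_mul_div_comm,
    div_add_div _ _ (mul_ne_zero (mul_ne_zero hz (pow_ne_zero 2 hA)) (pow_ne_zero 2 hB))
      (mul_ne_zero (pow_ne_zero 4 hz) (mul_ne_zero (pow_ne_zero 2 hA) (pow_ne_zero 2 hB))),
    div_eq_zero_iff]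
  left
  ring

set_option maxHeartbeats 4000000 in
lemma rel2 (z : ℂ) (hz : z ≠ 0) (hz1 : z - 1 ≠ 0) (hA : z^2 - z - 1 ≠ 0) (hB : z^2 + z - 1 ≠ 0) (hC : z^2 - 3*z + 1 ≠ 0) :
    Rfun z + z^(-4:ℤ) * Rfun ((z-1)/z) + (z-1)^(-4:ℤ) * Rfun (-1/(z-1)) = 0 := by
  rw [Rsub2 z hz hz1 hB hC, Rsub3 z hz1 hA hC, Rfun, zpow_neg4, zpow_neg4,
    div_mul_div_comm, div_mul_div_comm,
    div_add_div _ _ (mul_ne_zero (mul_ne_zero hz (pow_ne_zero 2 hA)) (pow_ne_zero 2 hB))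
      (mul_ne_zero (pow_ne_zero 4 hz) (mul_ne_zero (mul_ne_zero hz1 (pow_ne_zero 2 hB)) (pow_ne_zero 2 hC))),
    div_add_div _ _ (mul_ne_zero (mul_ne_zero (mul_ne_zero hz (pow_ne_zero 2 hA)) (pow_ne_zero 2 hB))
      (mul_ne_zero (pow_ne_zero 4 hz) (mul_ne_zero (mul_ne_zero hz1 (pow_ne_zero 2 hB)) (pow_ne_zero 2 hC))))
      (mul_ne_zero (pow_ne_zero 4 hz1) (mul_ne_zero (pow_ne_zero 2 hC) (pow_ne_zero 2 hA))),
    div_eq_zero_iff]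
  left
  ring

set_option maxHeartbeats 1000000 in
/-- Let `p = 3` and `λ = 2cos(π/3) = 1`, so `U = ((1,-1),(1,0))`.
Set `α₁ = (1+√5)/2`, `α₁′ = (1-√5)/2`, `α₂ = (-1+√5)/2`, `α₂′ = (-1-√5)/2`, and
define `q(z) = (-2/√5)/(z-α₁) + 1/(z-α₁)² - (2/√5)/(z-α₁′) - 1/(z-α₁′)²
+ (-2/√5)/(z-α₂) + 1/(z-α₂)² - (2/√5)/(z-α₂′) - 1/(z-α₂′)² + (8/√5)/z`.
Then `q` satisfies the rational period function relations of weight `4` on the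
modular group `G_3`: for every `z ∈ ℂ` with `Im z ≠ 0`,
`q(z) + z^{-4}·q(-1/z) = 0` and `q(z) + (q ∣_4 U)(z) + (q ∣_4 U²)(z) = 0`. -/
theorem stmt14
    (lam : ℝ) (hlam : lam = 2 * Real.cos (Real.pi / 3))
    (U : Matrix (Fin 2) (Fin 2) ℝ) (hU : U = !![lam, -1; 1, 0])
    (α₁ α₁' α₂ α₂' : ℝ)
    (hα₁ : α₁ = (1 + Real.sqrt 5) / 2) (hα₁' : α₁' = (1 - Real.sqrt 5) / 2)
    (hα₂ : α₂ = (-1 + Real.sqrt 5) / 2) (hα₂' : α₂' = (-1 - Real.sqrt 5) / 2)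
    (q : ℂ → ℂ)
    (hq : ∀ z : ℂ, q z =
      (-2 / (Real.sqrt 5 : ℂ)) / (z - (α₁ : ℂ)) + 1 / (z - (α₁ : ℂ)) ^ 2 -
      (2 / (Real.sqrt 5 : ℂ)) / (z - (α₁' : ℂ)) - 1 / (z - (α₁' : ℂ)) ^ 2 +
      (-2 / (Real.sqrt 5 : ℂ)) / (z - (α₂ : ℂ)) + 1 / (z - (α₂ : ℂ)) ^ 2 -
      (2 / (Real.sqrt 5 : ℂ)) / (z - (α₂' : ℂ)) - 1 / (z - (α₂' : ℂ)) ^ 2 +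
      (8 / (Real.sqrt 5 : ℂ)) / z) :
    ∀ z : ℂ, z.im ≠ 0 →
      q z + z ^ (-4 : ℤ) * q (-1 / z) = 0 ∧
      q z + slash 2 U q z + slash 2 (U ^ 2) q z = 0 := by
  have hlam1 : lam = 1 := by
    rw [hlam, Real.cos_pi_div_three]; norm_num
  have hU' : U = !![1, -1; 1, 0] := by rw [hU, hlam1]
  have hU2 : U ^ 2 = !![0, -1; 1, -1] := by
    rw [hU', pow_two]
    norm_num [Matrix.mul_fin_two]
  have hq' : ∀ w : ℂ, w.im ≠ 0 → q w = Rfun w / (Real.sqrt 5 : ℂ) := by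
    intro w hw
    rw [hq w, hα₁, hα₁', hα₂, hα₂']
    exact qform w hw
  intro z hz
  have hz0 : z ≠ 0 := ne_zero_of_im z hz
  have hz1 : z - 1 ≠ 0 := by simpa using sub_real_ne z hz 1
  have hzm1im : (z - 1).im ≠ 0 := by simpa using hz
  have hA := quadA z hz
  have hB := quadB z hz
  have hC := quadC z hz
  constructor
  · rw [hq' z hz, hq' (-1/z) (im_neg_inv z hz)]
    linear_combination (rel1 z hz0 hA hB) / (Real.sqrt 5 : ℂ)
  · have hs1 : slash 2 U q z = z ^ (-4 : ℤ) * q ((z - 1) / z) := by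
      rw [slash, hU']
      norm_num [sub_eq_add_neg]
    have hs2 : slash 2 (U ^ 2) q z = (z - 1) ^ (-4 : ℤ) * q (-1 / (z - 1)) := by
      rw [slash, hU2]
      norm_num [sub_eq_add_neg]
    rw [hs1, hs2, hq' z hz, hq' ((z - 1) / z) (im_frac z hz),
      hq' (-1 / (z - 1)) (im_neg_inv (z - 1) hzm1im)]
    linear_combination (rel2 z hz0 hz1 hA hB hC) / (Real.sqrt 5 : ℂ)
end
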